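/- arXiv:2007.15428 — 6 statements merged into one kernel-verified Lean document; each statement's English description precedes it below -/
import Mathlib

section
/- (Comparison principle) Let k be a dispersal kernel satisfying (K1), let f ∈ C¹([0,1]), and let T > 0. Suppose ū, u̲ : [0,T]×ℝ → [0,1] are bounded continuous functions, differentiable in t on (0,T], such that for all t ∈ (0,T] and x ∈ ℝ: ∂_t ū(t,x) − ∫_ℝ k(x−y)ū(t,y) dy + ū(t,x) − f(ū(t,x)) ≥ 0 ≥ ∂_t u̲(t,x) − ∫_ℝ k(x−y)u̲(t,y) dy + u̲(t,x) − f(u̲(t,x)). If ū(0,x) ≥ u̲(0,x) for all x ∈ ℝ, then ū(t,x) ≥ u̲(t,x) for all t ∈ [0,T] and x ∈ ℝ. -/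
open MeasureTheory Real Filter Set Topology

noncomputable section
set_option maxHeartbeats 1600000

/-- A dispersal kernel: continuous, nonnegative, total integral one. -/
def IsKernel (k : ℝ → ℝ) : Prop :=
  Continuous k ∧ (∀ x, 0 ≤ k x) ∧ (∫ x, k x) = 1

/-- The Mollison condition (K1). -/
def CondK1 (k : ℝ → ℝ) : Prop :=
  ∃ l : ℝ, 0 < l ∧ Integrable (fun x => k x * Real.exp (l * |x|))

/-- Comparison principle: if `ub` is an upper solution and `lb`
a lower solution of the nonlocal dispersal Fisher-KPP equation on `[0,T] × ℝ`
that are ordered at time `0`, then they are ordered on all of `[0,T] × ℝ`. -/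
theorem comparison_principle (k f : ℝ → ℝ)
    (hker : IsKernel k) (hK1 : CondK1 k)
    (hf : ContDiffOn ℝ 1 f (Icc 0 1))
    (T : ℝ) (hT : 0 < T)
    (ub lb : ℝ → ℝ → ℝ)
    (hubc : ContinuousOn (fun p : ℝ × ℝ => ub p.1 p.2) (Icc 0 T ×ˢ univ))
    (hlbc : ContinuousOn (fun p : ℝ × ℝ => lb p.1 p.2) (Icc 0 T ×ˢ univ))
    (hubr : ∀ t ∈ Icc (0:ℝ) T, ∀ x : ℝ, ub t x ∈ Icc (0:ℝ) 1)
    (hlbr : ∀ t ∈ Icc (0:ℝ) T, ∀ x : ℝ, lb t x ∈ Icc (0:ℝ) 1)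
    (hub : ∀ x : ℝ, ∀ t ∈ Ioc (0:ℝ) T, ∃ d : ℝ,
      HasDerivWithinAt (fun s => ub s x) d (Icc 0 T) t ∧
      0 ≤ d - (∫ y, k (x - y) * ub t y) + ub t x - f (ub t x))
    (hlb : ∀ x : ℝ, ∀ t ∈ Ioc (0:ℝ) T, ∃ d : ℝ,
      HasDerivWithinAt (fun s => lb s x) d (Icc 0 T) t ∧
      d - (∫ y, k (x - y) * lb t y) + lb t x - f (lb t x) ≤ 0)
    (hinit : ∀ x : ℝ, lb 0 x ≤ ub 0 x) :
    ∀ t ∈ Icc (0:ℝ) T, ∀ x : ℝ, lb t x ≤ ub t x := by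
  classical
  obtain ⟨l, hl0, hkl⟩ := hK1
  have hkcont : Continuous k := hker.1
  have hk0 : ∀ x, 0 ≤ k x := hker.2.1
  have hkone : (∫ x, k x) = 1 := hker.2.2
  -- integrability of the kernel
  have hkint : Integrable k := by
    refine hkl.mono hkcont.aestronglyMeasurable (Eventually.of_forall fun x => ?_)
    have h1 : (1:ℝ) ≤ Real.exp (l * |x|) :=
      Real.one_le_exp (by positivity)
    have : k x ≤ k x * Real.exp (l * |x|) := le_mul_of_one_le_right (hk0 x) h1
    rw [Real.norm_eq_abs, Real.norm_eq_abs, abs_of_nonneg (hk0 x),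
      abs_of_nonneg (mul_nonneg (hk0 x) (Real.exp_pos _).le)]
    exact this
  have hkτ : ∀ x : ℝ, Integrable (fun y => k (x - y)) := fun x => hkint.comp_sub_left x
  have hkτint : ∀ x : ℝ, (∫ y, k (x - y)) = 1 := fun x => by
    rw [integral_sub_left_eq_self k volume x, hkone]
  -- continuity of time / space slices
  have hubt : ∀ x : ℝ, ContinuousOn (fun t => ub t x) (Icc 0 T) := by
    intro x
    have : ContinuousOn (fun t : ℝ => (t, x)) (Icc 0 T) :=
      (continuous_id.prodMk continuous_const).continuousOn
    exact hubc.comp this (fun t ht => ⟨ht, mem_univ x⟩)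
  have hlbt : ∀ x : ℝ, ContinuousOn (fun t => lb t x) (Icc 0 T) := by
    intro x
    have : ContinuousOn (fun t : ℝ => (t, x)) (Icc 0 T) :=
      (continuous_id.prodMk continuous_const).continuousOn
    exact hlbc.comp this (fun t ht => ⟨ht, mem_univ x⟩)
  have hubx : ∀ t ∈ Icc (0:ℝ) T, Continuous (fun y => ub t y) := by
    intro t ht
    exact hubc.comp_continuous (continuous_const.prodMk continuous_id)
      (fun y => ⟨ht, mem_univ y⟩)
  have hlbx : ∀ t ∈ Icc (0:ℝ) T, Continuous (fun y => lb t y) := by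
    intro t ht
    exact hlbc.comp_continuous (continuous_const.prodMk continuous_id)
      (fun y => ⟨ht, mem_univ y⟩)
  -- integrability of the nonlocal terms
  have hintub : ∀ x : ℝ, ∀ t ∈ Icc (0:ℝ) T, Integrable (fun y => k (x - y) * ub t y) := by
    intro x t ht
    have := (hkτ x).bdd_mul (hubx t ht).aestronglyMeasurable
      (c := 1) (Eventually.of_forall fun y => by
        have h := hubr t ht y
        rw [Real.norm_eq_abs]
        exact abs_le.2 ⟨by linarith [h.1], h.2⟩)
    exact this.congr (Eventually.of_forall fun y => mul_comm _ _)
  have hintlb : ∀ x : ℝ, ∀ t ∈ Icc (0:ℝ) T, Integrable (fun y => k (x - y) * lb t y) := by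
    intro x t ht
    have := (hkτ x).bdd_mul (hlbx t ht).aestronglyMeasurable
      (c := 1) (Eventually.of_forall fun y => by
        have h := hlbr t ht y
        rw [Real.norm_eq_abs]
        exact abs_le.2 ⟨by linarith [h.1], h.2⟩)
    exact this.congr (Eventually.of_forall fun y => mul_comm _ _)
  -- Lipschitz bound for f on [0,1]
  obtain ⟨L₀, hL₀⟩ : ∃ C, ∀ a ∈ Icc (0:ℝ) 1, ‖derivWithin f (Icc 0 1) a‖ ≤ C :=
    (isCompact_Icc).exists_bound_of_continuousOn
      (hf.continuousOn_derivWithin (uniqueDiffOn_Icc one_pos) le_rfl)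
  set L : ℝ := max L₀ 0 with hLdef
  have hL : 0 ≤ L := le_max_right _ _
  have hLip : ∀ a ∈ Icc (0:ℝ) 1, ∀ b ∈ Icc (0:ℝ) 1, ‖f a - f b‖ ≤ L * ‖a - b‖ := by
    intro a ha b hb
    exact Convex.norm_image_sub_le_of_norm_derivWithin_le (hf.differentiableOn one_ne_zero)
      (fun y hy => (hL₀ y hy).trans (le_max_left _ _)) (convex_Icc 0 1) hb ha
  set C : ℝ := L + 2 with hCdef
  have hC2 : (2:ℝ) ≤ C := by simp [hCdef]; linarith
  have hC0 : 0 < C := by linarith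
  -- choose the derivatives
  choose! dub hdub hdub2 using hub
  choose! dlb hdlb hdlb2 using hlb
  -- main induction
  have key : ∀ n : ℕ, ∀ t ∈ Icc (0:ℝ) T, ∀ x : ℝ,
      lb t x - ub t x ≤ (C * t) ^ n / (n.factorial : ℝ) := by
    intro n
    induction n with
    | zero =>
      intro t ht x
      simp only [pow_zero, Nat.factorial_zero, Nat.cast_one, div_one]
      have h1 := (hlbr t ht x).2
      have h2 := (hubr t ht x).1
      linarith
    | succ n ih =>
      -- step with slack ε
      have step : ∀ ε : ℝ, 0 < ε → ∀ t ∈ Icc (0:ℝ) T, ∀ x : ℝ,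
          lb t x - ub t x ≤ (C * t) ^ (n+1) / ((n+1).factorial : ℝ) + ε * Real.exp t := by
        intro ε hε
        by_contra hcon
        push_neg at hcon
        obtain ⟨t₁, ht₁, x₁, hx₁⟩ := hcon
        set g : ℝ → ℝ := fun s =>
          lb s x₁ - ub s x₁ - ((C * s) ^ (n+1) / ((n+1).factorial : ℝ) + ε * Real.exp s) with hgdef
        have hgc : ContinuousOn g (Icc 0 T) := by
          apply ((hlbt x₁).sub (hubt x₁)).sub
          have hc1 : Continuous fun s : ℝ => (C * s) ^ (n+1) / ((n+1).factorial : ℝ) :=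
            ((continuous_const.mul continuous_id).pow (n+1)).div_const _
          exact (hc1.add ((continuous_const.mul Real.continuous_exp : Continuous fun s : ℝ => ε * Real.exp s))).continuousOn
        have hg0 : g 0 < 0 := by
          have := hinit x₁
          simp only [hgdef]
          have : (C * 0) ^ (n+1) = 0 := by simp
          rw [this]
          simp only [Real.exp_zero, mul_one, mul_zero, zero_div]
          have h0 : (0:ℝ) ^ (n+1) / ((n+1).factorial : ℝ) = 0 := by simp
          nlinarith [hinit x₁, (Nat.cast_pos (α := ℝ)).2 (Nat.factorial_pos (n+1))]
        have hgt₁ : 0 < g t₁ := by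
          simp only [hgdef]
          linarith
        -- last time before t₁ at which g ≤ 0
        set S : Set ℝ := {s | s ∈ Icc (0:ℝ) t₁ ∧ g s ≤ 0} with hSdef
        have hIccsub : Icc (0:ℝ) t₁ ⊆ Icc (0:ℝ) T :=
          Icc_subset_Icc le_rfl ht₁.2
        have hScl : IsClosed S := by
          have : S = Icc (0:ℝ) t₁ ∩ g ⁻¹' (Iic 0) := by
            ext s; simp [hSdef, and_comm]
          rw [this]
          exact (hgc.mono hIccsub).preimage_isClosed_of_isClosed isClosed_Icc isClosed_Iic
        have hScomp : IsCompact S := by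
          have : S ⊆ Icc (0:ℝ) t₁ := fun s hs => hs.1
          exact (isCompact_Icc).of_isClosed_subset hScl this
        have h0S : (0:ℝ) ∈ S := ⟨⟨le_rfl, ht₁.1⟩, hg0.le⟩
        set s₀ : ℝ := sSup S with hs₀def
        have hs₀S : s₀ ∈ S := hScomp.sSup_mem ⟨0, h0S⟩
        have hs₀le : s₀ ≤ t₁ := hs₀S.1.2
        have hs₀0 : 0 ≤ s₀ := hs₀S.1.1
        have hs₀lt : s₀ < t₁ := lt_of_le_of_ne hs₀le (by
          intro h; rw [h] at hs₀S; linarith [hs₀S.2])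
        have hpos : ∀ s ∈ Ioc s₀ t₁, 0 < g s := by
          intro s hs
          by_contra hns
          push_neg at hns
          have : s ∈ S := ⟨⟨hs₀0.trans hs.1.le, hs.2⟩, hns⟩
          exact absurd (le_csSup hScomp.bddAbove this) (not_le.2 hs.1)
        -- mean value theorem on [s₀, t₁]
        set g' : ℝ → ℝ := fun s =>
          dlb x₁ s - dub x₁ s - (C * (C * s) ^ n / (n.factorial : ℝ) + ε * Real.exp s) with hg'def
        have hderiv : ∀ s ∈ Ioo s₀ t₁, HasDerivAt g (g' s) s := by
          intro s hs
          have hsI : s ∈ Ioc (0:ℝ) T := ⟨lt_of_le_of_lt hs₀0 hs.1, hs.2.le.trans ht₁.2⟩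
          have hnb : Icc (0:ℝ) T ∈ 𝓝 s :=
            Icc_mem_nhds hsI.1 (lt_of_lt_of_le hs.2 ht₁.2)
          have h1 : HasDerivAt (fun s => lb s x₁) (dlb x₁ s) s :=
            (hdlb x₁ s hsI).hasDerivAt hnb
          have h2 : HasDerivAt (fun s => ub s x₁) (dub x₁ s) s :=
            (hdub x₁ s hsI).hasDerivAt hnb
          have h3 : HasDerivAt (fun s : ℝ => (C * s) ^ (n+1) / ((n+1).factorial : ℝ))
              (C * (C * s) ^ n / (n.factorial : ℝ)) s := by
            have hcs : HasDerivAt (fun s : ℝ => C * s) C s := by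
              simpa using (hasDerivAt_id s).const_mul C
            have := (hcs.pow (n+1)).div_const ((n+1).factorial : ℝ)
            refine this.congr_deriv ?_
            rw [Nat.factorial_succ]
            push_cast
            have hfn : (0:ℝ) < (n.factorial : ℝ) := by exact_mod_cast Nat.factorial_pos n
            field_simp
          have h4 : HasDerivAt (fun s : ℝ => ε * Real.exp s) (ε * Real.exp s) s :=
            (Real.hasDerivAt_exp s).const_mul ε
          exact (h1.sub h2).sub (h3.add h4)
        obtain ⟨ξ, hξ, hslope⟩ := exists_hasDerivAt_eq_slope g g' hs₀lt
          (hgc.mono (Icc_subset_Icc hs₀0 ht₁.2)) hderiv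
        have hslopepos : 0 < g' ξ := by
          rw [hslope]
          apply div_pos
          · linarith [hs₀S.2, hgt₁]
          · linarith
        -- now derive the contradiction from the differential inequalities at ξ
        have hξI : ξ ∈ Ioc (0:ℝ) T := ⟨lt_of_le_of_lt hs₀0 hξ.1, hξ.2.le.trans ht₁.2⟩
        have hξIcc : ξ ∈ Icc (0:ℝ) T := ⟨hξI.1.le, hξI.2⟩
        have hgpos : 0 < g ξ := hpos ξ ⟨hξ.1, hξ.2.le⟩
        set P : ℝ := lb ξ x₁ - ub ξ x₁ with hPdef
        set B : ℝ := (C * ξ) ^ n / (n.factorial : ℝ) with hBdef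
        have hB0 : 0 ≤ B := by
          have : 0 ≤ C * ξ := mul_nonneg hC0.le hξI.1.le
          positivity
        have hPB : P ≤ B := ih ξ hξIcc x₁
        have hPpos : 0 < P := by
          have hBpos : 0 ≤ (C * ξ) ^ (n+1) / ((n+1).factorial : ℝ) := by
            have : 0 ≤ C * ξ := mul_nonneg hC0.le hξI.1.le
            positivity
          have := hgpos
          simp only [hgdef] at this
          nlinarith [Real.exp_pos ξ]
        -- nonlocal term bound
        have hint : (∫ y, k (x₁ - y) * lb ξ y) - (∫ y, k (x₁ - y) * ub ξ y) ≤ B := by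
          rw [← integral_sub (hintlb x₁ ξ hξIcc) (hintub x₁ ξ hξIcc)]
          have h1 : (∫ y, (k (x₁ - y) * lb ξ y - k (x₁ - y) * ub ξ y))
              ≤ ∫ y, k (x₁ - y) * B := by
            apply integral_mono
            · exact (hintlb x₁ ξ hξIcc).sub (hintub x₁ ξ hξIcc)
            · exact (hkτ x₁).mul_const B
            · intro y
              have hy : lb ξ y - ub ξ y ≤ B := ih ξ hξIcc y
              have := hk0 (x₁ - y)
              simp only
              nlinarith
          calc (∫ y, (k (x₁ - y) * lb ξ y - k (x₁ - y) * ub ξ y)) ≤ ∫ y, k (x₁ - y) * B := h1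
            _ = (∫ y, k (x₁ - y)) * B := by rw [← integral_mul_const]
            _ = B := by rw [hkτint x₁, one_mul]
        -- Lipschitz bound for the reaction term
        have hfb : f (lb ξ x₁) - f (ub ξ x₁) ≤ L * P := by
          have h := hLip (lb ξ x₁) (hlbr ξ hξIcc x₁) (ub ξ x₁) (hubr ξ hξIcc x₁)
          rw [Real.norm_eq_abs, Real.norm_eq_abs] at h
          have h2 : |lb ξ x₁ - ub ξ x₁| = P := abs_of_pos hPpos
          rw [h2] at h
          calc f (lb ξ x₁) - f (ub ξ x₁) ≤ |f (lb ξ x₁) - f (ub ξ x₁)| := le_abs_self _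
            _ ≤ L * P := h
        -- combine
        have hdub3 := hdub2 x₁ ξ hξI
        have hdlb3 := hdlb2 x₁ ξ hξI
        have hd : dlb x₁ ξ - dub x₁ ξ ≤ C * B := by
          have hcomb : dlb x₁ ξ - dub x₁ ξ ≤
              ((∫ y, k (x₁ - y) * lb ξ y) - (∫ y, k (x₁ - y) * ub ξ y)) - P
              + (f (lb ξ x₁) - f (ub ξ x₁)) := by
            simp only [hPdef]; linarith
          have : dlb x₁ ξ - dub x₁ ξ ≤ B - P + L * P := by linarith
          nlinarith
        have : g' ξ ≤ -(ε * Real.exp ξ) := by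
          simp only [hg'def]
          rw [mul_div_assoc, ← hBdef]
          linarith
        nlinarith [Real.exp_pos ξ, hslopepos]
      -- pass to the limit ε → 0
      intro t ht x
      have hexp : 0 < Real.exp t := Real.exp_pos t
      refine le_of_forall_pos_le_add fun ε hε => ?_
      have := step (ε / Real.exp t) (by positivity) t ht x
      calc lb t x - ub t x ≤ (C * t) ^ (n+1) / ((n+1).factorial : ℝ) + ε / Real.exp t * Real.exp t :=
            this
        _ = (C * t) ^ (n+1) / ((n+1).factorial : ℝ) + ε := by
            rw [div_mul_cancel₀ _ (ne_of_gt hexp)]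
  -- conclude
  intro t ht x
  have hlim : Tendsto (fun n : ℕ => (C * t) ^ n / (n.factorial : ℝ)) atTop (𝓝 0) :=
    FloorSemiring.tendsto_pow_div_factorial_atTop (C * t)
  have hle : lb t x - ub t x ≤ 0 :=
    ge_of_tendsto hlim (Eventually.of_forall fun n => key n t ht x)
  linarith
end
end

section
/- Fix δ ∈ (0,1), A > 0 and D > 0, and for B > 0 define H_B(z) = A·z − B·z^{1+δ} − D·z^{1−δ} for z > 0. Then: (a) for every B ∈ (0, A²/(4D)), H_B^max := sup_{z>0} H_B(z) > 0, the supremum is attained at some z₀ > 0, and the set {z > 0 : H_B(z) > 0} is an open interval (μ_B, ν_B) containing z₀; (b) sup_{z>0} H_{A²/(4D)}(z) = 0; (c) as B → (A²/(4D))⁻ one has H_B^max → 0⁺ and ν_B − μ_B → 0⁺. -/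
open Real Filter Set Topology

noncomputable section

/-- The auxiliary function `H_B(z) = A z - B z^{1+δ} - D z^{1-δ}`. -/
def Hfun (A B D δ z : ℝ) : ℝ := A * z - B * z ^ (1 + δ) - D * z ^ (1 - δ)

/-- `H_B^max = sup_{z > 0} H_B(z)`. -/
def Hmax (A B D δ : ℝ) : ℝ := sSup (Hfun A B D δ '' Ioi 0)

/-- The left endpoint `μ_B` of the positivity set of `H_B`. -/
def muB (A B D δ : ℝ) : ℝ := sInf {z : ℝ | 0 < z ∧ 0 < Hfun A B D δ z}

/-- The right endpoint `ν_B` of the positivity set of `H_B`. -/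
def nuB (A B D δ : ℝ) : ℝ := sSup {z : ℝ | 0 < z ∧ 0 < Hfun A B D δ z}


lemma rpow_inv_rpow' (x δ : ℝ) (hx : 0 ≤ x) (hδ : δ ≠ 0) : (x ^ (1/δ)) ^ δ = x := by
  rw [← Real.rpow_mul hx, one_div, inv_mul_cancel₀ hδ, Real.rpow_one]

lemma rpow_rpow_inv' (z δ : ℝ) (hz : 0 ≤ z) (hδ : δ ≠ 0) : (z ^ δ) ^ (1/δ) = z := by
  rw [← Real.rpow_mul hz, mul_one_div, div_self hδ, Real.rpow_one]

lemma amgm_le (B D t : ℝ) (hB : 0 < B) (hD : 0 < D) (ht : 0 < t) :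
    2 * Real.sqrt (B * D) ≤ B * t + D * t⁻¹ := by
  have e1 : Real.sqrt (B*t) * Real.sqrt (D*t⁻¹) = Real.sqrt (B*D) := by
    rw [← Real.sqrt_mul (by positivity)]
    congr 1
    field_simp
  have e2 : Real.sqrt (B*t) ^ 2 = B*t := Real.sq_sqrt (by positivity)
  have e3 : Real.sqrt (D*t⁻¹) ^ 2 = D*t⁻¹ := Real.sq_sqrt (by positivity)
  nlinarith [sq_nonneg (Real.sqrt (B*t) - Real.sqrt (D*t⁻¹))]

lemma amgm_lt (B D t : ℝ) (hB : 0 < B) (hD : 0 < D) (ht : 0 < t)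
    (hne : t * t ≠ D / B) : 2 * Real.sqrt (B * D) < B * t + D * t⁻¹ := by
  have e1 : Real.sqrt (B*t) * Real.sqrt (D*t⁻¹) = Real.sqrt (B*D) := by
    rw [← Real.sqrt_mul (by positivity)]
    congr 1
    field_simp
  have e2 : Real.sqrt (B*t) ^ 2 = B*t := Real.sq_sqrt (by positivity)
  have e3 : Real.sqrt (D*t⁻¹) ^ 2 = D*t⁻¹ := Real.sq_sqrt (by positivity)
  have hne2 : Real.sqrt (B*t) ≠ Real.sqrt (D*t⁻¹) := by
    intro h
    apply hne
    have : B*t = D*t⁻¹ := by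
      rw [← e2, ← e3, h]
    field_simp at this ⊢
    nlinarith [this]
  have hpos : 0 < (Real.sqrt (B*t) - Real.sqrt (D*t⁻¹))^2 :=
    lt_of_le_of_ne (sq_nonneg _) (Ne.symm (pow_ne_zero 2 (sub_ne_zero.2 hne2)))
  nlinarith [hpos]

lemma amgm_eq (B D : ℝ) (hB : 0 < B) (hD : 0 < D) :
    B * Real.sqrt (D/B) + D * (Real.sqrt (D/B))⁻¹ = 2 * Real.sqrt (B*D) := by
  set ts := Real.sqrt (D/B) with hts_def
  have hts : 0 < ts := Real.sqrt_pos.2 (by positivity)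
  have h1 : B * (ts * ts) = D := by
    rw [Real.mul_self_sqrt (by positivity : (0:ℝ) ≤ D/B)]
    field_simp
  have h2 : Real.sqrt (B*D) * ts = D := by
    rw [hts_def, ← Real.sqrt_mul (by positivity)]
    have e : B*D*(D/B) = D^2 := by field_simp
    rw [e, Real.sqrt_sq hD.le]
  have hinv : ts⁻¹ * ts = 1 := inv_mul_cancel₀ hts.ne'
  have key : (B * ts + D * ts⁻¹ - 2*Real.sqrt (B*D)) * ts = 0 := by
    linear_combination h1 + D * hinv - 2*h2
  rcases mul_eq_zero.1 key with h | h
  · linarith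
  · exact absurd h hts.ne'

lemma phi_anti (B D s t : ℝ) (hB : 0 < B) (hs : 0 < s) (hst : s ≤ t) (h : B * (s*t) ≤ D) :
    B * t + D * t⁻¹ ≤ B * s + D * s⁻¹ := by
  have ht : 0 < t := hs.trans_le hst
  have key : B*s + D*s⁻¹ - (B*t + D*t⁻¹) = (t - s) * (D - B*(s*t)) / (s*t) := by
    field_simp
    ring
  have h2 : 0 ≤ (t - s) * (D - B*(s*t)) / (s*t) :=
    div_nonneg (mul_nonneg (by linarith) (by linarith)) (by positivity)
  linarith

lemma phi_mono (B D s t : ℝ) (hB : 0 < B) (hs : 0 < s) (hst : s ≤ t) (h : D ≤ B * (s*t)) :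
    B * s + D * s⁻¹ ≤ B * t + D * t⁻¹ := by
  have ht : 0 < t := hs.trans_le hst
  have key : B*t + D*t⁻¹ - (B*s + D*s⁻¹) = (t - s) * (B*(s*t) - D) / (s*t) := by
    field_simp
    ring
  have h2 : 0 ≤ (t - s) * (B*(s*t) - D) / (s*t) :=
    div_nonneg (mul_nonneg (by linarith) (by linarith)) (by positivity)
  linarith


lemma Hfun_factor (A B D δ z : ℝ) (hz : 0 < z) :
    Hfun A B D δ z = z * (A - (B * z ^ δ + D * (z ^ δ)⁻¹)) := by
  have h1 : z ^ ((1:ℝ)+δ) = z * z^δ := by rw [Real.rpow_add hz, Real.rpow_one]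
  have h2 : z ^ ((1:ℝ)-δ) = z * (z^δ)⁻¹ := by
    rw [show (1:ℝ)-δ = 1 + (-δ) by ring, Real.rpow_add hz, Real.rpow_one,
      Real.rpow_neg hz.le]
  simp only [Hfun, h1, h2]
  ring

lemma g_lt_of_Hpos (A B D δ z : ℝ) (hz : 0 < z) (h : 0 < Hfun A B D δ z) :
    B * z ^ δ + D * (z ^ δ)⁻¹ < A := by
  rw [Hfun_factor A B D δ z hz] at h
  nlinarith [h, hz]

lemma Hfun_continuousAt (A B D δ z : ℝ) (hz : 0 < z) : ContinuousAt (Hfun A B D δ) z := by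
  have h1 : ContinuousAt (fun w : ℝ => w ^ ((1:ℝ)+δ)) z :=
    Real.continuousAt_rpow_const z _ (Or.inl hz.ne')
  have h2 : ContinuousAt (fun w : ℝ => w ^ ((1:ℝ)-δ)) z :=
    Real.continuousAt_rpow_const z _ (Or.inl hz.ne')
  exact ((continuousAt_const.mul continuousAt_id).sub (continuousAt_const.mul h1)).sub
    (continuousAt_const.mul h2)

set_option maxHeartbeats 1000000 in
lemma key_lemma (A B D δ : ℝ) (hA : 0 < A) (hD : 0 < D) (hδ0 : 0 < δ) (hδ1 : δ < 1)
    (hB0 : 0 < B) (hBc : B < A^2/(4*D)) :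
    0 < Hmax A B D δ ∧
    (D/A)^(1/δ) ≤ muB A B D δ ∧
    (∃ z₀ ∈ Ioo (muB A B D δ) (nuB A B D δ), 0 < z₀ ∧ Hfun A B D δ z₀ = Hmax A B D δ) ∧
    {z : ℝ | 0 < z ∧ 0 < Hfun A B D δ z} = Ioo (muB A B D δ) (nuB A B D δ) ∧
    nuB A B D δ ≤ (A/B)^(1/δ) ∧
    Hmax A B D δ ≤ (A/B)^(1/δ) * (A - 2*Real.sqrt (B*D)) := by
  set S : Set ℝ := {z : ℝ | 0 < z ∧ 0 < Hfun A B D δ z} with hS_def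
  set m0 : ℝ := (D/A)^(1/δ) with hm0_def
  set M : ℝ := (A/B)^(1/δ) with hM_def
  have hm0 : 0 < m0 := Real.rpow_pos_of_pos (by positivity) _
  have hM0 : 0 < M := Real.rpow_pos_of_pos (by positivity) _
  set ts : ℝ := Real.sqrt (D/B) with hts_def
  have hts : 0 < ts := Real.sqrt_pos.2 (by positivity)
  set zs : ℝ := ts ^ (1/δ) with hzs_def
  have hzs0 : 0 < zs := Real.rpow_pos_of_pos hts _
  have hzsδ : zs ^ δ = ts := rpow_inv_rpow' ts δ hts.le hδ0.ne'
  have hts_sq : ts * ts = D/B := Real.mul_self_sqrt (by positivity)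
  -- 2√(BD) < A
  have hsqBcD : Real.sqrt (A^2/(4*D) * D) = A/2 := by
    have e : A^2/(4*D)*D = (A/2)^2 := by field_simp; ring
    rw [e, Real.sqrt_sq (by positivity)]
  have hsqrtBD : Real.sqrt (B*D) < A/2 := by
    rw [← hsqBcD]
    exact Real.sqrt_lt_sqrt (by positivity) (by nlinarith [hBc, hD])
  -- value at zs
  have hg_zs : B * zs^δ + D * (zs^δ)⁻¹ = 2 * Real.sqrt (B*D) := by
    rw [hzsδ, hts_def]; exact amgm_eq B D hB0 hD
  have hH_zs : 0 < Hfun A B D δ zs := by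
    rw [Hfun_factor A B D δ zs hzs0, hg_zs]
    have h : 0 < A - 2*Real.sqrt (B*D) := by linarith
    exact mul_pos hzs0 h
  have hzs_mem : zs ∈ S := ⟨hzs0, hH_zs⟩
  have hS_ne : S.Nonempty := ⟨zs, hzs_mem⟩
  -- bounds for members of S
  have hS_sub : ∀ z ∈ S, m0 < z ∧ z < M := by
    rintro z ⟨hz0, hzH⟩
    have hzδ : 0 < z^δ := Real.rpow_pos_of_pos hz0 δ
    have hg := g_lt_of_Hpos A B D δ z hz0 hzH
    have einv : (z^δ)⁻¹ * z^δ = 1 := inv_mul_cancel₀ hzδ.ne'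
    have hBz : 0 < B * z^δ := by positivity
    have hDz : 0 < D * (z^δ)⁻¹ := by positivity
    constructor
    · have h1 : D/A < z^δ := by
        rw [div_lt_iff₀ hA]
        nlinarith [hg, hzδ, einv, hBz]
      have h2 : (D/A)^(1/δ) < (z^δ)^(1/δ) :=
        Real.rpow_lt_rpow (by positivity) h1 (by positivity)
      rwa [rpow_rpow_inv' z δ hz0.le hδ0.ne'] at h2
    · have h1 : z^δ < A/B := by
        rw [lt_div_iff₀ hB0]
        nlinarith [hg, hDz]
      have h2 : (z^δ)^(1/δ) < (A/B)^(1/δ) :=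
        Real.rpow_lt_rpow hzδ.le h1 (by positivity)
      rwa [rpow_rpow_inv' z δ hz0.le hδ0.ne'] at h2
  have hS_bddB : BddBelow S := ⟨m0, fun z hz => (hS_sub z hz).1.le⟩
  have hS_bddA : BddAbove S := ⟨M, fun z hz => (hS_sub z hz).2.le⟩
  have hμ_def : muB A B D δ = sInf S := rfl
  have hν_def : nuB A B D δ = sSup S := rfl
  set μ : ℝ := sInf S with hμ
  set ν : ℝ := sSup S with hν
  have hm0μ : m0 ≤ μ := le_csInf hS_ne fun z hz => (hS_sub z hz).1.le
  have hνM : ν ≤ M := csSup_le hS_ne fun z hz => (hS_sub z hz).2.le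
  -- S is a neighborhood of its points
  have hS_nhds : ∀ z ∈ S, S ∈ 𝓝 z := by
    rintro z ⟨hz0, hzH⟩
    have h1 : {w : ℝ | 0 < w} ∈ 𝓝 z := by
      filter_upwards [eventually_gt_nhds hz0] with w hw using hw
    have h2 : {w : ℝ | 0 < Hfun A B D δ w} ∈ 𝓝 z :=
      (Hfun_continuousAt A B D δ z hz0).eventually (eventually_gt_nhds hzH)
    filter_upwards [h1, h2] with w hw1 hw2 using ⟨hw1, hw2⟩
  have hμ_notmem : μ ∉ S := by
    intro hμS
    obtain ⟨ε, hε, hball⟩ := Metric.mem_nhds_iff.1 (hS_nhds μ hμS)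
    have hmem : μ - ε/2 ∈ S := by
      apply hball
      rw [Metric.mem_ball, Real.dist_eq]
      rw [abs_of_nonpos (by linarith)]
      linarith
    have := csInf_le hS_bddB hmem
    rw [← hμ] at this
    linarith
  have hν_notmem : ν ∉ S := by
    intro hνS
    obtain ⟨ε, hε, hball⟩ := Metric.mem_nhds_iff.1 (hS_nhds ν hνS)
    have hmem : ν + ε/2 ∈ S := by
      apply hball
      rw [Metric.mem_ball, Real.dist_eq]
      rw [abs_of_nonneg (by linarith)]
      linarith
    have := le_csSup hS_bddA hmem
    rw [← hν] at this
    linarith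
  -- S = Ioo μ ν
  have hS_Ioo : S = Ioo μ ν := by
    ext z
    constructor
    · intro hz
      have h1 : μ ≤ z := csInf_le hS_bddB hz
      have h2 : z ≤ ν := le_csSup hS_bddA hz
      refine ⟨lt_of_le_of_ne h1 ?_, lt_of_le_of_ne h2 ?_⟩
      · intro h; exact hμ_notmem (h ▸ hz)
      · intro h; exact hν_notmem (h ▸ hz)
    · rintro ⟨h1, h2⟩
      obtain ⟨a, haS, haz⟩ := exists_lt_of_csInf_lt hS_ne h1
      obtain ⟨b, hbS, hzb⟩ := exists_lt_of_lt_csSup hS_ne h2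
      have hz0 : 0 < z := haS.1.trans haz
      have hzδ : 0 < z^δ := Real.rpow_pos_of_pos hz0 δ
      refine ⟨hz0, ?_⟩
      have hg : B * z^δ + D * (z^δ)⁻¹ < A := by
        rcases le_total z zs with hc | hc
        · have haδ : a^δ ≤ z^δ := Real.rpow_le_rpow haS.1.le haz.le hδ0.le
          have hzδts : z^δ ≤ ts := by
            rw [← hzsδ]; exact Real.rpow_le_rpow hz0.le hc hδ0.le
          have haδts : a^δ ≤ ts := haδ.trans hzδts
          have haδ0 : 0 < a^δ := Real.rpow_pos_of_pos haS.1 δ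
          have hprod : B * (a^δ * z^δ) ≤ D := by
            have : a^δ * z^δ ≤ ts * ts :=
              mul_le_mul haδts hzδts hzδ.le hts.le
            rw [hts_sq] at this
            calc B * (a^δ * z^δ) ≤ B * (D/B) :=
                  mul_le_mul_of_nonneg_left this hB0.le
            _ = D := by field_simp
          have hmono := phi_anti B D (a^δ) (z^δ) hB0 haδ0 haδ hprod
          have hga := g_lt_of_Hpos A B D δ a haS.1 haS.2
          linarith
        · have hbδ : z^δ ≤ b^δ := Real.rpow_le_rpow hz0.le hzb.le hδ0.le
          have htszδ : ts ≤ z^δ := by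
            rw [← hzsδ]; exact Real.rpow_le_rpow hzs0.le hc hδ0.le
          have htsbδ : ts ≤ b^δ := htszδ.trans hbδ
          have hprod : D ≤ B * (z^δ * b^δ) := by
            have : ts * ts ≤ z^δ * b^δ :=
              mul_le_mul htszδ htsbδ hts.le hzδ.le
            rw [hts_sq] at this
            calc D = B * (D/B) := by field_simp
            _ ≤ B * (z^δ * b^δ) := mul_le_mul_of_nonneg_left this hB0.le
          have hmono := phi_mono B D (z^δ) (b^δ) hB0 hzδ hbδ hprod
          have hgb := g_lt_of_Hpos A B D δ b hbS.1 hbS.2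
          linarith
      rw [Hfun_factor A B D δ z hz0]
      exact mul_pos hz0 (by linarith)
  -- maximum on compact interval
  have hzs_Icc : zs ∈ Icc m0 M :=
    ⟨(hS_sub zs hzs_mem).1.le, (hS_sub zs hzs_mem).2.le⟩
  have hcont : ContinuousOn (Hfun A B D δ) (Icc m0 M) := fun z hz =>
    (Hfun_continuousAt A B D δ z (hm0.trans_le hz.1)).continuousWithinAt
  obtain ⟨z₀, hz₀C, hz₀max⟩ := isCompact_Icc.exists_isMaxOn ⟨zs, hzs_Icc⟩ hcont
  rw [isMaxOn_iff] at hz₀max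
  have hz₀0 : 0 < z₀ := hm0.trans_le hz₀C.1
  have hHz₀pos : 0 < Hfun A B D δ z₀ := lt_of_lt_of_le hH_zs (hz₀max zs hzs_Icc)
  have hz₀S : z₀ ∈ S := ⟨hz₀0, hHz₀pos⟩
  have hGreat : IsGreatest (Hfun A B D δ '' Ioi 0) (Hfun A B D δ z₀) := by
    constructor
    · exact ⟨z₀, hz₀0, rfl⟩
    · rintro _ ⟨y, hy, rfl⟩
      by_cases hyC : y ∈ Icc m0 M
      · exact hz₀max y hyC
      · have hyS : y ∉ S := fun hyS =>
          hyC ⟨(hS_sub y hyS).1.le, (hS_sub y hyS).2.le⟩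
        have : ¬ (0 < Hfun A B D δ y) := fun h => hyS ⟨hy, h⟩
        push_neg at this
        linarith
  have hHmax_eq : Hmax A B D δ = Hfun A B D δ z₀ := hGreat.csSup_eq
  have hHmaxpos : 0 < Hmax A B D δ := by rw [hHmax_eq]; exact hHz₀pos
  refine ⟨hHmaxpos, hm0μ, ⟨z₀, ?_, hz₀0, hHmax_eq.symm⟩, hS_Ioo, hνM, ?_⟩
  · rw [hμ_def, hν_def, ← hS_Ioo]; exact hz₀S
  · rw [hHmax_eq, Hfun_factor A B D δ z₀ hz₀0]
    have hzδ0 : 0 < z₀^δ := Real.rpow_pos_of_pos hz₀0 δ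
    have h1 : 2*Real.sqrt (B*D) ≤ B*z₀^δ + D*(z₀^δ)⁻¹ := amgm_le B D (z₀^δ) hB0 hD hzδ0
    have h2 : z₀ ≤ M := (hS_sub z₀ hz₀S).2.le
    have h3 : 0 ≤ A - 2*Real.sqrt (B*D) := by linarith
    calc z₀ * (A - (B*z₀^δ + D*(z₀^δ)⁻¹)) ≤ z₀ * (A - 2*Real.sqrt (B*D)) := by
          apply mul_le_mul_of_nonneg_left (by linarith) hz₀0.le
    _ ≤ M * (A - 2*Real.sqrt (B*D)) := mul_le_mul_of_nonneg_right h2 h3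

set_option maxHeartbeats 1000000 in
/-- basic properties of the auxiliary function `H_B`:
(a) for `B ∈ (0, A²/(4D))` the supremum of `H_B` on `(0,∞)` is positive and
attained, and the positivity set is an open interval `(μ_B, ν_B)` containing
the maximizer; (b) the supremum vanishes at `B = A²/(4D)`; (c) `H_B^max → 0`
and `ν_B - μ_B → 0` as `B → (A²/(4D))⁻`. -/
theorem Hfun_properties (A D δ : ℝ) (hA : 0 < A) (hD : 0 < D)
    (hδ : δ ∈ Ioo (0:ℝ) 1) :
    (∀ B ∈ Ioo (0:ℝ) (A^2 / (4*D)),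
      0 < Hmax A B D δ ∧
      0 < muB A B D δ ∧
      (∃ z₀ ∈ Ioo (muB A B D δ) (nuB A B D δ),
        0 < z₀ ∧ Hfun A B D δ z₀ = Hmax A B D δ) ∧
      {z : ℝ | 0 < z ∧ 0 < Hfun A B D δ z} = Ioo (muB A B D δ) (nuB A B D δ)) ∧
    Hmax A (A^2 / (4*D)) D δ = 0 ∧
    Tendsto (fun B => Hmax A B D δ) (𝓝[<] (A^2 / (4*D))) (𝓝 0) ∧
    Tendsto (fun B => nuB A B D δ - muB A B D δ) (𝓝[<] (A^2 / (4*D))) (𝓝 0) := by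
  obtain ⟨hδ0, hδ1⟩ := hδ
  have hBc0 : (0:ℝ) < A^2/(4*D) := by positivity
  have hsqBcD : Real.sqrt (A^2/(4*D) * D) = A/2 := by
    have e : A^2/(4*D)*D = (A/2)^2 := by field_simp; ring
    rw [e, Real.sqrt_sq (by positivity)]
  have hm0pos : (0:ℝ) < (D/A)^(1/δ) := Real.rpow_pos_of_pos (by positivity) _
  set M₂ : ℝ := (A/(A^2/(8*D)))^(1/δ) with hM₂_def
  have hM₂0 : 0 < M₂ := Real.rpow_pos_of_pos (by positivity) _
  have hhalf : A^2/(8*D) < A^2/(4*D) := by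
    rw [div_lt_div_iff₀ (by positivity) (by positivity)]
    nlinarith [pow_pos hA 2, hD]
  have hhalf0 : (0:ℝ) < A^2/(8*D) := by positivity
  -- uniform bound (A/B)^(1/δ) ≤ M₂ for B ≥ A²/(8D)
  have hMle : ∀ B : ℝ, A^2/(8*D) < B → (A/B)^(1/δ) ≤ M₂ := by
    intro B hB
    have hB0 : 0 < B := hhalf0.trans hB
    exact Real.rpow_le_rpow (div_nonneg hA.le hB0.le)
      (div_le_div_of_nonneg_left hA.le hhalf0 hB.le) (one_div_nonneg.2 hδ0.le)
  refine ⟨?_, ?_, ?_, ?_⟩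
  · -- part (a)
    rintro B ⟨hB0, hBc⟩
    obtain ⟨k1, k2, k3, k4, -, -⟩ := key_lemma A B D δ hA hD hδ0 hδ1 hB0 hBc
    exact ⟨k1, lt_of_lt_of_le hm0pos k2, k3, k4⟩
  · -- part (b)
    set Bc : ℝ := A^2/(4*D) with hBc_def
    set ts : ℝ := Real.sqrt (D/Bc) with hts_def
    have hts : 0 < ts := Real.sqrt_pos.2 (by positivity)
    set zc : ℝ := ts ^ (1/δ) with hzc_def
    have hzc0 : 0 < zc := Real.rpow_pos_of_pos hts _
    have hzcδ : zc ^ δ = ts := rpow_inv_rpow' ts δ hts.le hδ0.ne'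
    have h2s : 2 * Real.sqrt (Bc*D) = A := by
      rw [hBc_def, hsqBcD]; ring
    have hg_zc : Bc * zc^δ + D * (zc^δ)⁻¹ = 2 * Real.sqrt (Bc*D) := by
      rw [hzcδ, hts_def]; exact amgm_eq Bc D hBc0 hD
    have hHzc : Hfun A Bc D δ zc = 0 := by
      rw [Hfun_factor A Bc D δ zc hzc0, hg_zc, h2s, sub_self, mul_zero]
    have hGreat : IsGreatest (Hfun A Bc D δ '' Ioi 0) 0 := by
      constructor
      · exact ⟨zc, hzc0, hHzc⟩
      · rintro _ ⟨y, hy, rfl⟩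
        rw [mem_Ioi] at hy
        rw [Hfun_factor A Bc D δ y hy]
        have h1 : 2*Real.sqrt (Bc*D) ≤ Bc*y^δ + D*(y^δ)⁻¹ :=
          amgm_le Bc D (y^δ) hBc0 hD (Real.rpow_pos_of_pos hy δ)
        have h2 : A - (Bc*y^δ + D*(y^δ)⁻¹) ≤ 0 := by linarith [h2s ▸ h1]
        exact mul_nonpos_iff.2 (Or.inl ⟨hy.le, h2⟩)
    exact hGreat.csSup_eq
  · -- part (c1): Hmax → 0
    have hh : Tendsto (fun B : ℝ => M₂ * (A - 2*Real.sqrt (B*D))) (𝓝[<] (A^2/(4*D))) (𝓝 0) := by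
      have hcont : Continuous fun B : ℝ => M₂ * (A - 2*Real.sqrt (B*D)) :=
        continuous_const.mul (continuous_const.sub (continuous_const.mul
          (Real.continuous_sqrt.comp (continuous_id.mul continuous_const))))
      have := hcont.tendsto (A^2/(4*D))
      rw [show M₂ * (A - 2*Real.sqrt (A^2/(4*D)*D)) = 0 by rw [hsqBcD]; ring] at this
      exact this.mono_left nhdsWithin_le_nhds
    refine tendsto_of_tendsto_of_tendsto_of_le_of_le' tendsto_const_nhds hh ?_ ?_
    · filter_upwards [Ioo_mem_nhdsLT hhalf] with B hB
      exact (key_lemma A B D δ hA hD hδ0 hδ1 (hhalf0.trans hB.1) hB.2).1.le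
    · filter_upwards [Ioo_mem_nhdsLT hhalf] with B hB
      obtain ⟨-, -, -, -, -, k6⟩ := key_lemma A B D δ hA hD hδ0 hδ1 (hhalf0.trans hB.1) hB.2
      refine k6.trans (mul_le_mul_of_nonneg_right (hMle B hB.1) ?_)
      have : Real.sqrt (B*D) ≤ A/2 := by
        rw [← hsqBcD]
        exact Real.sqrt_le_sqrt (by nlinarith [hB.2, hD])
      linarith
  · -- part (c2): ν - μ → 0
    rw [Metric.tendsto_nhds]
    intro ε hε
    set Bc : ℝ := A^2/(4*D) with hBc_def
    set zc : ℝ := (Real.sqrt (D/Bc)) ^ (1/δ) with hzc_def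
    have htsc : 0 < Real.sqrt (D/Bc) := Real.sqrt_pos.2 (by positivity)
    have hzc0 : 0 < zc := Real.rpow_pos_of_pos htsc _
    have hzcδ : zc ^ δ = Real.sqrt (D/Bc) := rpow_inv_rpow' _ δ htsc.le hδ0.ne'
    set m0 : ℝ := (D/A)^(1/δ) with hm0_def
    set K : Set ℝ := Icc m0 M₂ \ Ioo (zc - ε/3) (zc + ε/3) with hK_def
    have main : ∀ᶠ B in 𝓝[<] Bc, (0 < B ∧ B < Bc) ∧
        ∀ z, (0 < z ∧ 0 < Hfun A B D δ z) → (zc - ε/3 < z ∧ z < zc + ε/3) := by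
      have hSbound : ∀ B, A^2/(8*D) < B → B < Bc → ∀ z, (0 < z ∧ 0 < Hfun A B D δ z) →
          z ∈ Icc m0 M₂ ∧ B * z^δ + D * (z^δ)⁻¹ < A := by
        intro B hB1 hB2 z hz
        have hB0 : 0 < B := hhalf0.trans hB1
        obtain ⟨-, k2, -, k4, k5, -⟩ := key_lemma A B D δ hA hD hδ0 hδ1 hB0 hB2
        have hzIoo : z ∈ Ioo (muB A B D δ) (nuB A B D δ) := by rw [← k4]; exact hz
        refine ⟨⟨k2.trans hzIoo.1.le, hzIoo.2.le.trans (k5.trans (hMle B hB1))⟩, ?_⟩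
        exact g_lt_of_Hpos A B D δ z hz.1 hz.2
      rcases eq_empty_or_nonempty K with hK | hK
      · filter_upwards [Ioo_mem_nhdsLT hhalf] with B hB
        have hB0 : 0 < B := hhalf0.trans hB.1
        refine ⟨⟨hB0, hB.2⟩, fun z hz => ?_⟩
        obtain ⟨hzIcc, -⟩ := hSbound B hB.1 hB.2 z hz
        by_contra h
        push_neg at h
        have : z ∈ K := ⟨hzIcc, fun hmem => by
          rcases lt_or_ge (zc - ε/3) z with h1 | h1
          · exact absurd (h h1) (not_le.2 hmem.2)
          · exact absurd hmem.1 (not_lt.2 h1)⟩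
        rw [hK] at this
        exact this
      · -- K nonempty: get a positive gap
        have hKcomp : IsCompact K := isCompact_Icc.diff isOpen_Ioo
        have hKcont : ContinuousOn (fun z : ℝ => Bc*z^δ + D*(z^δ)⁻¹) K := by
          intro z hz
          have hz0 : 0 < z := hm0pos.trans_le hz.1.1
          have h := Real.continuousAt_rpow_const z δ (Or.inl hz0.ne')
          have hne : z^δ ≠ 0 := (Real.rpow_pos_of_pos hz0 δ).ne'
          exact ((continuousAt_const.mul h).add
            (continuousAt_const.mul (h.inv₀ hne))).continuousWithinAt
        obtain ⟨z₁, hz₁K, hz₁min⟩ := hKcomp.exists_isMinOn hK hKcont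
        rw [isMinOn_iff] at hz₁min
        have hz₁0 : 0 < z₁ := hm0pos.trans_le hz₁K.1.1
        have hz₁δ : 0 < z₁^δ := Real.rpow_pos_of_pos hz₁0 δ
        have hz₁ne : z₁ ≠ zc := by
          intro h
          exact hz₁K.2 (by rw [h]; exact ⟨by linarith, by linarith⟩)
        have hsqne : z₁^δ * z₁^δ ≠ D/Bc := by
          intro h
          apply hz₁ne
          have h1 : z₁^δ = Real.sqrt (D/Bc) := by
            rw [← h, Real.sqrt_mul_self hz₁δ.le]
          have := rpow_rpow_inv' z₁ δ hz₁0.le hδ0.ne'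
          rw [← this, h1, hzc_def]
        have h2s : 2 * Real.sqrt (Bc*D) = A := by rw [hBc_def, hsqBcD]; ring
        have hgap : A < Bc*z₁^δ + D*(z₁^δ)⁻¹ := by
          have := amgm_lt Bc D (z₁^δ) hBc0 hD hz₁δ hsqne
          linarith [h2s ▸ this]
        obtain ⟨c, hc0, hcle⟩ : ∃ c : ℝ, 0 < c ∧ ∀ x ∈ K, A + c ≤ Bc*x^δ + D*(x^δ)⁻¹ := by
          refine ⟨Bc*z₁^δ + D*(z₁^δ)⁻¹ - A, by linarith, fun x hx => ?_⟩
          have := hz₁min x hx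
          linarith
        have hMδ : (0:ℝ) < M₂^δ + 1 := by positivity
        have hlt : max (A^2/(8*D)) (Bc - c/(M₂^δ+1)) < Bc :=
          max_lt hhalf (by
            have : 0 < c/(M₂^δ+1) := div_pos hc0 hMδ
            linarith)
        filter_upwards [Ioo_mem_nhdsLT hlt] with B hB
        have hB1 : A^2/(8*D) < B := lt_of_le_of_lt (le_max_left _ _) hB.1
        have hB2 : Bc - c/(M₂^δ+1) < B := lt_of_le_of_lt (le_max_right _ _) hB.1
        have hB0 : 0 < B := hhalf0.trans hB1
        refine ⟨⟨hB0, hB.2⟩, fun z hz => ?_⟩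
        obtain ⟨hzIcc, hgz⟩ := hSbound B hB1 hB.2 z hz
        by_contra h
        push_neg at h
        have hzK : z ∈ K := ⟨hzIcc, fun hmem => by
          rcases lt_or_ge (zc - ε/3) z with h1 | h1
          · exact absurd (h h1) (not_le.2 hmem.2)
          · exact absurd hmem.1 (not_lt.2 h1)⟩
        have hmin := hcle z hzK
        have hzδM : z^δ ≤ M₂^δ := Real.rpow_le_rpow hz.1.le hzIcc.2 hδ0.le
        have hzδ0 : 0 < z^δ := Real.rpow_pos_of_pos hz.1 δ
        -- g_B z = g_Bc z - (Bc - B) z^δ ≥ A + c - (Bc-B) M₂^δ > A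
        have heq : B*z^δ + D*(z^δ)⁻¹ = Bc*z^δ + D*(z^δ)⁻¹ - (Bc - B)*z^δ := by ring
        have hsmall : (Bc - B)*z^δ < c := by
          have h1 : Bc - B < c/(M₂^δ+1) := by linarith
          have h2 : 0 ≤ Bc - B := by linarith [hB.2]
          have h3 : (Bc - B)*z^δ ≤ (c/(M₂^δ+1))*(M₂^δ) := by
            apply mul_le_mul h1.le hzδM hzδ0.le (le_of_lt (div_pos hc0 hMδ))
          have h4 : (c/(M₂^δ+1))*(M₂^δ) < c := by
            rw [div_mul_eq_mul_div, div_lt_iff₀ hMδ]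
            nlinarith [hc0, Real.rpow_pos_of_pos hM₂0 δ]
          linarith
        have : A < B*z^δ + D*(z^δ)⁻¹ := by
          rw [heq]
          linarith [hmin, hsmall]
        linarith
    filter_upwards [main] with B hBmain
    obtain ⟨⟨hB0, hB2⟩, hall⟩ := hBmain
    obtain ⟨k1, -, k3, k4, -, -⟩ := key_lemma A B D δ hA hD hδ0 hδ1 hB0 hB2
    obtain ⟨z₀, hz₀mem, hz₀0, hz₀eq⟩ := k3
    have hz₀S : z₀ ∈ {z : ℝ | 0 < z ∧ 0 < Hfun A B D δ z} := by
      rw [k4]; exact hz₀mem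
    have hS_ne : Set.Nonempty {z : ℝ | 0 < z ∧ 0 < Hfun A B D δ z} := ⟨z₀, hz₀S⟩
    have hμ_ge : zc - ε/3 ≤ muB A B D δ :=
      le_csInf hS_ne fun z hz => (hall z hz).1.le
    have hν_le : nuB A B D δ ≤ zc + ε/3 :=
      csSup_le hS_ne fun z hz => (hall z hz).2.le
    have hμν : muB A B D δ < nuB A B D δ := hz₀mem.1.trans hz₀mem.2
    rw [Real.dist_eq, sub_zero, abs_of_nonneg (by linarith)]
    linarith
end
end

section
/- Fix δ ∈ (0,1), A > 0 and D > 0, and for B ∈ (0, A²/(4D)] define g(B) = sup_{z>0} (A·z − B·z^{1+δ} − D·z^{1−δ}). Then g is continuous and strictly decreasing on (0, A²/(4D)], g(B) → +∞ as B → 0⁺, and g(A²/(4D)) = 0. Consequently, for every p > 0 there exists a unique B(p) ∈ (0, A²/(4D)) with g(B(p)) = p, and B(p) → A²/(4D) as p → 0⁺. -/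
open Real Filter Set Topology

noncomputable section

/-- `g(B) = sup_{z > 0} (A z - B z^{1+δ} - D z^{1-δ})`. -/
def gB (A D δ B : ℝ) : ℝ := sSup (Hfun A B D δ '' Ioi 0)

lemma Hfun_le {A B D δ z : ℝ} (hB : 0 < B) (hD : 0 < D) (hz : 0 < z) :
    Hfun A B D δ z ≤ (A - 2 * Real.sqrt (B * D)) * z := by
  obtain ⟨u, hu0⟩ : ∃ u, z ^ ((1+δ)/2) = u := ⟨_, rfl⟩
  obtain ⟨v, hv0⟩ : ∃ v, z ^ ((1-δ)/2) = v := ⟨_, rfl⟩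
  have hu : u * u = z ^ (1+δ) := by
    rw [← hu0, ← Real.rpow_add hz]; ring_nf
  have hv : v * v = z ^ (1-δ) := by
    rw [← hv0, ← Real.rpow_add hz]; ring_nf
  have huv : u * v = z := by
    rw [← hu0, ← hv0, ← Real.rpow_add hz]; ring_nf; exact Real.rpow_one z
  have hsB : Real.sqrt B * Real.sqrt B = B := Real.mul_self_sqrt hB.le
  have hsD : Real.sqrt D * Real.sqrt D = D := Real.mul_self_sqrt hD.le
  have hsBD : Real.sqrt (B * D) = Real.sqrt B * Real.sqrt D := Real.sqrt_mul hB.le D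
  have key : B*(u*u) + D*(v*v) - 2*(Real.sqrt B * Real.sqrt D)*(u*v)
      = (Real.sqrt B * u - Real.sqrt D * v)^2 := by
    linear_combination (-(u*u)) * hsB + (-(v*v)) * hsD
  have key2 : 0 ≤ B*(u*u) + D*(v*v) - 2*(Real.sqrt B * Real.sqrt D)*(u*v) :=
    key ▸ sq_nonneg _
  unfold Hfun
  rw [← hu, ← hv, ← huv, hsBD]
  nlinarith [key2]

lemma Hfun_z0 {A B D δ : ℝ} (hB : 0 < B) (hD : 0 < D) (hδ : 0 < δ) :
    Hfun A B D δ ((D/B) ^ (1/(2*δ))) = (A - 2*Real.sqrt (B*D)) * ((D/B) ^ (1/(2*δ))) := by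
  set z0 := (D/B) ^ (1/(2*δ)) with hz0def
  have hDB : (0:ℝ) < D/B := div_pos hD hB
  have hz0 : 0 < z0 := Real.rpow_pos_of_pos hDB _
  have h1 : z0 ^ δ = Real.sqrt (D/B) := by
    rw [hz0def, ← Real.rpow_mul hDB.le, Real.sqrt_eq_rpow]
    congr 1
    field_simp
  have hsB : Real.sqrt B > 0 := Real.sqrt_pos.2 hB
  have hsD : Real.sqrt D > 0 := Real.sqrt_pos.2 hD
  have hdiv : Real.sqrt (D/B) = Real.sqrt D / Real.sqrt B := Real.sqrt_div hD.le B
  have hBD : Real.sqrt (B*D) = Real.sqrt B * Real.sqrt D := Real.sqrt_mul hB.le D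
  have hB2 : Real.sqrt B * Real.sqrt B = B := Real.mul_self_sqrt hB.le
  have hD2 : Real.sqrt D * Real.sqrt D = D := Real.mul_self_sqrt hD.le
  have h2 : B * z0 ^ (1+δ) = Real.sqrt (B*D) * z0 := by
    rw [Real.rpow_add hz0, Real.rpow_one, h1, hdiv, hBD]
    field_simp
    linear_combination (-1) * hB2
  have h3 : D * z0 ^ (1-δ) = Real.sqrt (B*D) * z0 := by
    rw [Real.rpow_sub hz0, Real.rpow_one, h1, hdiv, hBD]
    field_simp
    linear_combination (-1) * hD2
  unfold Hfun
  rw [h2, h3]; ring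

lemma gB_max {A B D δ : ℝ} (hA : 0 < A) (hD : 0 < D) (hδ : δ ∈ Ioo (0:ℝ) 1)
    (hB : B ∈ Ioc (0:ℝ) (A^2/(4*D))) :
    ∃ z : ℝ, 0 < z ∧ gB A D δ B = Hfun A B D δ z ∧
      (∀ w ∈ Ioi (0:ℝ), Hfun A B D δ w ≤ Hfun A B D δ z) ∧ 0 ≤ Hfun A B D δ z ∧
      z ≤ (A/B) ^ (1/δ) := by
  obtain ⟨hB0, hBK⟩ := hB
  obtain ⟨hδ0, hδ1⟩ := hδ
  have hδne : δ ≠ 0 := ne_of_gt hδ0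
  have hBD2 : B * D ≤ (A/2)^2 := by
    have h4 : A^2/(4*D)*D = (A/2)^2 := by field_simp; ring
    nlinarith [mul_le_mul_of_nonneg_right hBK hD.le]
  have hsqrtBD : Real.sqrt (B*D) ≤ A/2 := by
    calc Real.sqrt (B*D) ≤ Real.sqrt ((A/2)^2) := Real.sqrt_le_sqrt hBD2
    _ = A/2 := Real.sqrt_sq (by positivity)
  set z0 := (D/B) ^ (1/(2*δ)) with hz0def
  have hz0 : 0 < z0 := Real.rpow_pos_of_pos (div_pos hD hB0) _
  have hHz0 : 0 ≤ Hfun A B D δ z0 := by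
    rw [Hfun_z0 hB0 hD hδ0]
    have : 0 ≤ A - 2*Real.sqrt (B*D) := by linarith
    positivity
  set a := min z0 ((D/A) ^ (1/δ)) with hadef
  set Z := max z0 ((A/B) ^ (1/δ)) with hZdef
  have ha : 0 < a := lt_min hz0 (Real.rpow_pos_of_pos (div_pos hD hA) _)
  have hz0mem : z0 ∈ Icc a Z := ⟨min_le_left _ _, le_max_left _ _⟩
  have hneg : ∀ w : ℝ, 0 < w → w ∉ Icc a Z → Hfun A B D δ w < 0 := by
    intro w hw hwn
    have hsplit : w ^ (1:ℝ) = w ^ δ * w ^ (1-δ) := by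
      rw [← Real.rpow_add hw]; ring_nf
    rw [Real.rpow_one] at hsplit
    rcases not_and_or.1 ((mem_Icc (a := a)).not.1 hwn) with h | h
    · have hwa : w < (D/A) ^ (1/δ) := lt_of_lt_of_le (lt_of_not_ge h) (min_le_right _ _)
      have hwd : w ^ δ < D/A := by
        calc w ^ δ < ((D/A) ^ (1/δ)) ^ δ :=
              Real.rpow_lt_rpow hw.le hwa hδ0
        _ = D/A := by
              rw [← Real.rpow_mul (by positivity), one_div, inv_mul_cancel₀ hδne,
                Real.rpow_one]
      have h1 : A * w < D * w ^ (1-δ) := by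
        have h2 : A * (w ^ δ * w ^ (1-δ)) < D * w ^ (1-δ) := by
          rw [← mul_assoc]
          calc A * w ^ δ * w ^ (1-δ) = w ^ δ * w ^ (1-δ) * A := by ring
          _ < D / A * w ^ (1-δ) * A :=
                mul_lt_mul_of_pos_right
                  (mul_lt_mul_of_pos_right hwd (Real.rpow_pos_of_pos hw (1-δ))) hA
          _ = D * w ^ (1-δ) := by field_simp
        rwa [← hsplit] at h2
      have hpos : 0 < B * w ^ (1+δ) := by positivity
      unfold Hfun; linarith
    · have hwZ : (A/B) ^ (1/δ) < w := lt_of_le_of_lt (le_max_right _ _) (lt_of_not_ge h)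
      have hwd : A/B < w ^ δ := by
        calc A/B = ((A/B) ^ (1/δ)) ^ δ := by
              rw [← Real.rpow_mul (by positivity), one_div, inv_mul_cancel₀ hδne,
                Real.rpow_one]
        _ < w ^ δ := Real.rpow_lt_rpow (by positivity) hwZ hδ0
      have h1 : A * w < B * w ^ (1+δ) := by
        have hsplit2 : w ^ (1+δ) = w * w ^ δ := by
          rw [Real.rpow_add hw, Real.rpow_one]
        rw [hsplit2]
        have := (div_lt_iff₀ hB0).1 hwd
        nlinarith
      have hpos : 0 < D * w ^ (1-δ) := by positivity
      unfold Hfun; linarith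
  have hcont : ContinuousOn (Hfun A B D δ) (Icc a Z) := by
    have hne : ∀ x ∈ Icc a Z, x ≠ 0 ∨ (0:ℝ) ≤ 1+δ := fun x _ => Or.inr (by linarith)
    have hne' : ∀ x ∈ Icc a Z, x ≠ 0 ∨ (0:ℝ) ≤ 1-δ := fun x _ => Or.inr (by linarith)
    exact ((continuousOn_const.mul continuousOn_id).sub
      (continuousOn_const.mul (continuousOn_id.rpow_const hne))).sub
      (continuousOn_const.mul (continuousOn_id.rpow_const hne'))
  obtain ⟨z, hzmem, hzmax⟩ :=
    isCompact_Icc.exists_isMaxOn (Set.nonempty_of_mem hz0mem) hcont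
  have hz : 0 < z := lt_of_lt_of_le ha hzmem.1
  have hHz : 0 ≤ Hfun A B D δ z := le_trans hHz0 (hzmax hz0mem)
  have hub : ∀ w ∈ Ioi (0:ℝ), Hfun A B D δ w ≤ Hfun A B D δ z := by
    intro w hw
    by_cases hmem : w ∈ Icc a Z
    · exact hzmax hmem
    · exact le_trans (hneg w hw hmem).le hHz
  have hgB : gB A D δ B = Hfun A B D δ z := by
    apply IsGreatest.csSup_eq
    constructor
    · exact ⟨z, hz, rfl⟩
    · rintro _ ⟨w, hw, rfl⟩; exact hub w hw
  have hzbound : z ≤ (A/B) ^ (1/δ) := by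
    have hsplit2 : z ^ (1+δ) = z * z ^ δ := by
      rw [Real.rpow_add hz, Real.rpow_one]
    have h1 : B * (z * z ^ δ) ≤ A * z := by
      have hDz : 0 < D * z ^ (1-δ) := by positivity
      have := hHz; unfold Hfun at this; rw [hsplit2] at this; linarith
    have h2 : z ^ δ ≤ A/B := by
      rw [le_div_iff₀ hB0]
      have := (mul_le_mul_iff_of_pos_right hz).1 (by nlinarith : B * z ^ δ * z ≤ A * z)
      linarith
    calc z = (z ^ δ) ^ (1/δ) := by
          rw [← Real.rpow_mul hz.le, mul_one_div, div_self hδne, Real.rpow_one]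
    _ ≤ (A/B) ^ (1/δ) :=
          Real.rpow_le_rpow (Real.rpow_nonneg hz.le δ) h2 (by positivity)
  exact ⟨z, hz, hgB, hub, hHz, hzbound⟩

/-- `g` is continuous and strictly decreasing on `(0, A²/(4D)]`,
blows up as `B → 0⁺`, vanishes at `A²/(4D)`; hence for every `p > 0` there is a
unique `B(p) ∈ (0, A²/(4D))` with `g(B(p)) = p`, and `B(p) → A²/(4D)` as
`p → 0⁺`. -/
theorem gB_properties (A D δ : ℝ) (hA : 0 < A) (hD : 0 < D)
    (hδ : δ ∈ Ioo (0:ℝ) 1) :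
    ContinuousOn (gB A D δ) (Ioc 0 (A^2 / (4*D))) ∧
    StrictAntiOn (gB A D δ) (Ioc 0 (A^2 / (4*D))) ∧
    Tendsto (gB A D δ) (𝓝[>] 0) atTop ∧
    gB A D δ (A^2 / (4*D)) = 0 ∧
    ∃ Bp : ℝ → ℝ,
      (∀ p : ℝ, 0 < p →
        Bp p ∈ Ioo (0:ℝ) (A^2 / (4*D)) ∧ gB A D δ (Bp p) = p ∧
        (∀ B' ∈ Ioo (0:ℝ) (A^2 / (4*D)), gB A D δ B' = p → B' = Bp p)) ∧
      Tendsto Bp (𝓝[>] 0) (𝓝 (A^2 / (4*D))) := by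
  obtain ⟨hδ0, hδ1⟩ := hδ
  set K := A^2 / (4*D) with hKdef
  have hK : 0 < K := by positivity
  -- strict antitonicity
  have hanti : StrictAntiOn (gB A D δ) (Ioc 0 K) := by
    intro B1 h1 B2 h2 h12
    obtain ⟨z2, hz2, hg2, hub2, hH2, -⟩ := gB_max hA hD ⟨hδ0, hδ1⟩ h2
    obtain ⟨z1, hz1, hg1, hub1, -, -⟩ := gB_max hA hD ⟨hδ0, hδ1⟩ h1
    have hlt : Hfun A B2 D δ z2 < Hfun A B1 D δ z2 := by
      unfold Hfun
      have : 0 < z2 ^ (1+δ) := Real.rpow_pos_of_pos hz2 _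
      nlinarith
    calc gB A D δ B2 = Hfun A B2 D δ z2 := hg2
    _ < Hfun A B1 D δ z2 := hlt
    _ ≤ Hfun A B1 D δ z1 := hub1 z2 hz2
    _ = gB A D δ B1 := hg1.symm
  -- the key quantitative estimate
  have hest : ∀ B1 ∈ Ioc (0:ℝ) K, ∀ B2 ∈ Ioc (0:ℝ) K, B1 ≤ B2 →
      gB A D δ B2 ≤ gB A D δ B1 ∧
      gB A D δ B1 ≤ gB A D δ B2 + (B2 - B1) * ((A/B1) ^ (1/δ)) ^ ((1:ℝ)+δ) := by
    intro B1 h1 B2 h2 h12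
    obtain ⟨z1, hz1, hg1, hub1, hH1, hzb1⟩ := gB_max hA hD ⟨hδ0, hδ1⟩ h1
    obtain ⟨z2, hz2, hg2, hub2, hH2, -⟩ := gB_max hA hD ⟨hδ0, hδ1⟩ h2
    constructor
    · rw [hg1, hg2]
      have h0 : Hfun A B2 D δ z2 ≤ Hfun A B1 D δ z2 := by
        unfold Hfun
        have : 0 ≤ z2 ^ (1+δ) := (Real.rpow_pos_of_pos hz2 _).le
        nlinarith
      exact h0.trans (hub1 z2 hz2)
    · rw [hg1, hg2]
      have key : Hfun A B1 D δ z1 = Hfun A B2 D δ z1 + (B2 - B1) * z1 ^ ((1:ℝ)+δ) := by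
        unfold Hfun; ring
      have h1' : Hfun A B2 D δ z1 ≤ Hfun A B2 D δ z2 := hub2 z1 hz1
      have h2' : z1 ^ ((1:ℝ)+δ) ≤ ((A/B1) ^ (1/δ)) ^ ((1:ℝ)+δ) :=
        Real.rpow_le_rpow hz1.le hzb1 (by linarith)
      have h3' : (B2 - B1) * z1 ^ ((1:ℝ)+δ) ≤ (B2 - B1) * ((A/B1) ^ (1/δ)) ^ ((1:ℝ)+δ) :=
        mul_le_mul_of_nonneg_left h2' (by linarith)
      linarith [key, h1', h3']
  -- continuity
  have hcont : ContinuousOn (gB A D δ) (Ioc 0 K) := by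
    intro B hBmem
    set s : Set ℝ := Ioc 0 K ∩ Ici (B/2) with hsdef
    have hB0 : 0 < B := hBmem.1
    set L : ℝ := ((A/(B/2)) ^ (1/δ)) ^ ((1:ℝ)+δ) with hLdef
    have hL0 : 0 ≤ L := by positivity
    have habs : ∀ x ∈ s, ∀ y ∈ s, |gB A D δ x - gB A D δ y| ≤ L * |x - y| := by
      have main : ∀ x ∈ s, ∀ y ∈ s, x ≤ y →
          0 ≤ gB A D δ x - gB A D δ y ∧ gB A D δ x - gB A D δ y ≤ L * (y - x) := by
        intro x hx y hy hxy
        obtain ⟨hxm, hxhalf⟩ := hx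
        obtain ⟨hym, hyhalf⟩ := hy
        obtain ⟨hmono, hlip⟩ := hest x hxm y hym hxy
        have hx0 : 0 < x := hxm.1
        refine ⟨by linarith, ?_⟩
        have hbound : ((A/x) ^ (1/δ)) ^ ((1:ℝ)+δ) ≤ L := by
          rw [hLdef]
          apply Real.rpow_le_rpow (Real.rpow_nonneg (div_pos hA hx0).le _) ?_ (by linarith)
          apply Real.rpow_le_rpow (div_pos hA hx0).le ?_ (by positivity)
          exact div_le_div_of_nonneg_left hA.le (by linarith) hxhalf
        have := mul_le_mul_of_nonneg_left hbound (by linarith : (0:ℝ) ≤ y - x)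
        nlinarith
      intro x hx y hy
      rcases le_total x y with h | h
      · obtain ⟨ha1, ha2⟩ := main x hx y hy h
        rw [abs_of_nonneg ha1, abs_of_nonpos (by linarith : x - y ≤ 0)]
        linarith
      · obtain ⟨ha1, ha2⟩ := main y hy x hx h
        rw [abs_of_nonpos (by linarith : gB A D δ x - gB A D δ y ≤ 0),
          abs_of_nonneg (by linarith : (0:ℝ) ≤ x - y)]
        linarith
    have hlip : LipschitzOnWith (Real.toNNReal L) (gB A D δ) s := by
      rw [lipschitzOnWith_iff_dist_le_mul]
      intro x hx y hy
      rw [Real.dist_eq, Real.dist_eq]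
      calc |gB A D δ x - gB A D δ y| ≤ L * |x - y| := habs x hx y hy
      _ = (Real.toNNReal L : ℝ) * |x - y| := by rw [Real.coe_toNNReal L hL0]
    have hBins : B ∈ s := ⟨hBmem, by simp; linarith⟩
    have hsmem : s ∈ 𝓝[Ioc 0 K] B :=
      inter_mem self_mem_nhdsWithin
        (mem_nhdsWithin_of_mem_nhds (Ici_mem_nhds (by linarith)))
    exact (hlip.continuousOn B hBins).mono_of_mem_nhdsWithin hsmem
  -- blow-up at 0
  have htop : Tendsto (gB A D δ) (𝓝[>] 0) atTop := by
    have hfac1 : Tendsto (fun B : ℝ => A - 2*Real.sqrt (B*D)) (𝓝[>] 0) (𝓝 A) := by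
      have hc : Continuous (fun B : ℝ => A - 2*Real.sqrt (B*D)) :=
        continuous_const.sub (continuous_const.mul
          (Real.continuous_sqrt.comp (continuous_id.mul continuous_const)))
      have h0 := (hc.tendsto 0).mono_left (nhdsWithin_le_nhds (s := Ioi (0:ℝ)))
      simpa using h0
    have hfac2 : Tendsto (fun B : ℝ => (D/B) ^ (1/(2*δ))) (𝓝[>] 0) atTop := by
      apply (tendsto_rpow_atTop (by positivity : (0:ℝ) < 1/(2*δ))).comp
      have h1 : Tendsto (fun B : ℝ => B⁻¹) (𝓝[>] 0) atTop := tendsto_inv_nhdsGT_zero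
      have := h1.const_mul_atTop hD
      exact this.congr (fun B => (div_eq_mul_inv D B).symm)
    have hφ : Tendsto (fun B : ℝ => (A - 2*Real.sqrt (B*D)) * ((D/B) ^ (1/(2*δ))))
        (𝓝[>] 0) atTop := Tendsto.pos_mul_atTop hA hfac1 hfac2
    apply tendsto_atTop_mono' _ _ hφ
    filter_upwards [Ioc_mem_nhdsGT_of_mem (by constructor <;> [exact le_refl 0; exact hK])]
      with B hBmem
    obtain ⟨z, hz, hg, hub, -, -⟩ := gB_max hA hD ⟨hδ0, hδ1⟩ hBmem
    have hz0pos : (0:ℝ) < (D/B) ^ (1/(2*δ)) :=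
      Real.rpow_pos_of_pos (div_pos hD hBmem.1) _
    calc (A - 2*Real.sqrt (B*D)) * ((D/B) ^ (1/(2*δ)))
        = Hfun A B D δ ((D/B) ^ (1/(2*δ))) := (Hfun_z0 hBmem.1 hD hδ0).symm
    _ ≤ Hfun A B D δ z := hub _ hz0pos
    _ = gB A D δ B := hg.symm
  -- value at the right endpoint
  have hgK : gB A D δ K = 0 := by
    obtain ⟨z, hz, hg, hub, hH, -⟩ := gB_max hA hD ⟨hδ0, hδ1⟩ ⟨hK, le_refl K⟩
    have hKD : Real.sqrt (K*D) = A/2 := by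
      have : K * D = (A/2)^2 := by rw [hKdef]; field_simp; ring
      rw [this, Real.sqrt_sq (by positivity)]
    have hle : Hfun A K D δ z ≤ 0 := by
      have := Hfun_le (A := A) (δ := δ) hK hD hz
      rw [hKD] at this
      have h0 : (A - 2*(A/2)) * z = 0 := by ring
      linarith [this, h0.le]
    rw [hg]
    linarith
  -- existence of the inverse
  have hex : ∀ p : ℝ, 0 < p → ∃ B ∈ Ioo (0:ℝ) K, gB A D δ B = p := by
    intro p hp
    have hev1 : ∀ᶠ B in 𝓝[>] (0:ℝ), p < gB A D δ B := htop.eventually_gt_atTop p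
    have hev2 : Ioo (0:ℝ) K ∈ 𝓝[>] (0:ℝ) :=
      Ioo_mem_nhdsGT_of_mem ⟨le_refl 0, hK⟩
    obtain ⟨B0, hB0p, hB0mem⟩ := (hev1.and (eventually_of_mem hev2 fun x hx => hx)).exists
    have hsub : Icc B0 K ⊆ Ioc 0 K := fun x hx => ⟨lt_of_lt_of_le hB0mem.1 hx.1, hx.2⟩
    have hivt := intermediate_value_Icc' hB0mem.2.le (hcont.mono hsub)
    have hpmem : p ∈ Icc (gB A D δ K) (gB A D δ B0) := ⟨by rw [hgK]; exact hp.le, hB0p.le⟩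
    obtain ⟨B, hBmem, hgBp⟩ := hivt hpmem
    refine ⟨B, ⟨lt_of_lt_of_le hB0mem.1 hBmem.1, ?_⟩, hgBp⟩
    rcases lt_or_eq_of_le hBmem.2 with h | h
    · exact h
    · exfalso; rw [h, hgK] at hgBp; linarith
  classical
  set Bp : ℝ → ℝ := fun p => if h : 0 < p then (hex p h).choose else K with hBpdef
  have hBpspec : ∀ p : ℝ, (hp : 0 < p) →
      Bp p ∈ Ioo (0:ℝ) K ∧ gB A D δ (Bp p) = p := by
    intro p hp
    have := (hex p hp).choose_spec
    simp only [hBpdef, dif_pos hp]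
    exact this
  refine ⟨hcont, hanti, htop, hgK, Bp, ?_, ?_⟩
  · intro p hp
    obtain ⟨hmem, hval⟩ := hBpspec p hp
    refine ⟨hmem, hval, ?_⟩
    intro B' hB' hgB'
    apply hanti.injOn ⟨hB'.1, hB'.2.le⟩ ⟨hmem.1, hmem.2.le⟩
    rw [hgB', hval]
  · rw [tendsto_order]
    constructor
    · intro c hc
      set B1 := (max c 0 + K)/2 with hB1def
      have hmax : max c 0 < K := max_lt hc hK
      have hB1mem : B1 ∈ Ioc (0:ℝ) K := by
        constructor
        · have : (0:ℝ) ≤ max c 0 := le_max_right _ _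
          rw [hB1def]; linarith
        · rw [hB1def]; linarith
      have hB1K : B1 < K := by rw [hB1def]; linarith
      have hcB1 : c < B1 := by
        have : c ≤ max c 0 := le_max_left _ _
        rw [hB1def]; linarith
      have hq : 0 < gB A D δ B1 := by
        have := hanti hB1mem ⟨hK, le_refl K⟩ hB1K
        rw [hgK] at this; linarith
      filter_upwards [Ioo_mem_nhdsGT_of_mem ⟨le_refl 0, hq⟩] with p hp
      obtain ⟨hmem, hval⟩ := hBpspec p hp.1
      by_contra hcon
      push_neg at hcon
      have hBpB1 : Bp p ≤ B1 := by linarith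
      have : gB A D δ B1 ≤ gB A D δ (Bp p) := by
        rcases lt_or_eq_of_le hBpB1 with h | h
        · exact (hanti ⟨hmem.1, hmem.2.le⟩ hB1mem h).le
        · rw [h]
      rw [hval] at this
      linarith [hp.2]
    · intro c hc
      filter_upwards [self_mem_nhdsWithin] with p hp
      exact lt_trans (hBpspec p hp).1.2 hc
end
end

section
/- Let k(x) = (2πσ)^{−1/2}·exp(−(x−α)²/(2σ)) with σ > 0 and α ∈ ℝ, set r = α/√(2σ), and let f satisfy (H). If f'(0) ≥ 1 then c_l* < 0 < c_r*. If f'(0) < 1, then there exists a constant r* > 0 such that: (i) if r > r* then 0 < c_l* < c_r*; (ii) if r = r* then 0 = c_l* < c_r*; (iii) if −r* < r < r* then c_l* < 0 < c_r*; (iv) if r = −r* then c_l* < c_r* = 0; (v) if r < −r* then c_l* < c_r* < 0. -/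
open MeasureTheory Real Filter Set Topology

noncomputable section

/-- Condition (K2): `k` is positive somewhere on each side of the origin. -/
def CondK2 (k : ℝ → ℝ) : Prop :=
  (∃ x₁ : ℝ, 0 < x₁ ∧ 0 < k x₁) ∧ (∃ x₂ : ℝ, x₂ < 0 ∧ 0 < k x₂)

/-- The moment generating function `λ ↦ ∫ k(x) e^{λ x} dx`. -/
def Mgf (k : ℝ → ℝ) (l : ℝ) : ℝ := ∫ x, k x * Real.exp (l * x)

/-- The function `c(λ) = λ⁻¹ (∫ k(x) e^{λx} dx - 1 + f'(0))`,
with `f0` playing the role of `f'(0)`. -/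
def cFun (k : ℝ → ℝ) (f0 : ℝ) (l : ℝ) : ℝ := l⁻¹ * (Mgf k l - 1 + f0)

/-- `l ∈ (0, λ⁺)`: `l` is positive and lies strictly below some exponent `m`
for which `∫ k(x) e^{m x} dx < ∞`. -/
def MemIpos (k : ℝ → ℝ) (l : ℝ) : Prop :=
  0 < l ∧ ∃ m : ℝ, l < m ∧ Integrable (fun x => k x * Real.exp (m * x))

/-- `l ∈ (λ⁻, 0)`: `l` is negative and lies strictly above some exponent `m`
for which `∫ k(x) e^{m x} dx < ∞`. -/
def MemIneg (k : ℝ → ℝ) (l : ℝ) : Prop :=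
  l < 0 ∧ ∃ m : ℝ, m < l ∧ Integrable (fun x => k x * Real.exp (m * x))

/-- The spreading speed to the right, `c_r* = inf_{λ ∈ (0,λ⁺)} c(λ)`. -/
def cR (k : ℝ → ℝ) (f0 : ℝ) : ℝ := sInf {y | ∃ l, MemIpos k l ∧ y = cFun k f0 l}

/-- The spreading speed to the left, `c_l* = sup_{λ ∈ (λ⁻,0)} c(λ)`. -/
def cL (k : ℝ → ℝ) (f0 : ℝ) : ℝ := sSup {y | ∃ l, MemIneg k l ∧ y = cFun k f0 l}

/-- The Fisher-KPP hypothesis (H) on the reaction term `f`, where `f0`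
denotes `f'(0)` (the one-sided derivative of `f` at `0` within `[0,1]`). -/
def HypH (f : ℝ → ℝ) (f0 : ℝ) : Prop :=
  ContDiffOn ℝ 1 f (Icc 0 1) ∧ HasDerivWithinAt f f0 (Icc 0 1) 0 ∧
  f 0 = 0 ∧ f 1 = 0 ∧ 0 < f0 ∧
  (∀ u ∈ Ioo (0:ℝ) 1, 0 < f u ∧ f u ≤ f0 * u)


namespace SG


/-- Gaussian density with mean `a`, variance `σ`. -/
def gK (σ a : ℝ) : ℝ → ℝ := fun x =>
  (Real.sqrt (2 * Real.pi * σ))⁻¹ * Real.exp (-((x - a)^2 / (2 * σ)))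

/-- The value `c(λ)` for the Gaussian kernel. -/
def cval (σ a f0 l : ℝ) : ℝ := l⁻¹ * (Real.exp (a*l + σ*l^2/2) - 1 + f0)

lemma gK_mul_exp {σ : ℝ} (hσ : 0 < σ) (a l x : ℝ) :
    gK σ a x * Real.exp (l * x)
      = Real.exp (a*l + σ*l^2/2) * gK σ (a + σ*l) x := by
  unfold gK
  have hexp : (-((x - a)^2 / (2 * σ))) + l * x
      = (a*l + σ*l^2/2) + (-((x - (a + σ*l))^2 / (2 * σ))) := by
    field_simp
    ring
  rw [mul_assoc, ← Real.exp_add, hexp, Real.exp_add]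
  ring

lemma integrable_gK {σ : ℝ} (hσ : 0 < σ) (a : ℝ) : Integrable (gK σ a) := by
  have h : gK σ a = fun x =>
      (Real.sqrt (2 * Real.pi * σ))⁻¹ * Real.exp (-(2*σ)⁻¹ * (x - a)^2) := by
    funext x
    unfold gK
    congr 1
    congr 1
    field_simp
  rw [h]
  exact ((integrable_exp_neg_mul_sq (by positivity : (0:ℝ) < (2*σ)⁻¹)).comp_sub_right
    a).const_mul _

lemma integral_gK {σ : ℝ} (hσ : 0 < σ) (a : ℝ) : (∫ x, gK σ a x) = 1 := by
  have h : gK σ a = fun x =>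
      (Real.sqrt (2 * Real.pi * σ))⁻¹ * Real.exp (-(2*σ)⁻¹ * (x - a)^2) := by
    funext x
    unfold gK
    congr 1
    congr 1
    field_simp
  rw [h, MeasureTheory.integral_const_mul,
    integral_sub_right_eq_self (fun x => Real.exp (-(2*σ)⁻¹ * x^2)) a,
    integral_gaussian]
  have h2 : Real.pi / (2*σ)⁻¹ = 2 * Real.pi * σ := by
    field_simp
  rw [h2]
  exact inv_mul_cancel₀ (by positivity)

lemma integrable_gK_mul_exp {σ : ℝ} (hσ : 0 < σ) (a m : ℝ) :
    Integrable (fun x => gK σ a x * Real.exp (m * x)) := by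
  simp_rw [gK_mul_exp hσ a m]
  exact ((integrable_gK hσ (a + σ*m)).const_mul _)

lemma mgf_gK {σ : ℝ} (hσ : 0 < σ) (a l : ℝ) :
    Mgf (gK σ a) l = Real.exp (a*l + σ*l^2/2) := by
  unfold Mgf
  simp_rw [gK_mul_exp hσ a l]
  rw [MeasureTheory.integral_const_mul, integral_gK hσ, mul_one]

lemma memIpos_gK {σ : ℝ} (hσ : 0 < σ) (a l : ℝ) :
    MemIpos (gK σ a) l ↔ 0 < l :=
  ⟨fun h => h.1, fun h => ⟨h, l+1, by linarith, integrable_gK_mul_exp hσ a (l+1)⟩⟩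

lemma memIneg_gK {σ : ℝ} (hσ : 0 < σ) (a l : ℝ) :
    MemIneg (gK σ a) l ↔ l < 0 :=
  ⟨fun h => h.1, fun h => ⟨h, l-1, by linarith, integrable_gK_mul_exp hσ a (l-1)⟩⟩

lemma cFun_gK {σ : ℝ} (hσ : 0 < σ) (a f0 l : ℝ) :
    cFun (gK σ a) f0 l = cval σ a f0 l := by
  unfold cFun cval
  rw [mgf_gK hσ]

/-- The set over which `cR` infimizes, for the Gaussian kernel. -/
def SR (σ a f0 : ℝ) : Set ℝ := {y | ∃ l, 0 < l ∧ y = cval σ a f0 l}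

lemma cR_gK {σ : ℝ} (hσ : 0 < σ) (a f0 : ℝ) :
    cR (gK σ a) f0 = sInf (SR σ a f0) := by
  unfold cR SR
  congr 1
  ext y
  constructor
  · rintro ⟨l, hl, rfl⟩
    exact ⟨l, (memIpos_gK hσ a l).1 hl, cFun_gK hσ a f0 l⟩
  · rintro ⟨l, hl, rfl⟩
    exact ⟨l, (memIpos_gK hσ a l).2 hl, (cFun_gK hσ a f0 l).symm⟩

lemma cval_neg_eq (σ a f0 l : ℝ) : cval σ a f0 l = -cval σ (-a) f0 (-l) := by
  unfold cval
  rw [show (-a)*(-l) + σ*(-l)^2/2 = a*l + σ*l^2/2 by ring, inv_neg]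
  ring

lemma cL_gK {σ : ℝ} (hσ : 0 < σ) (a f0 : ℝ) :
    cL (gK σ a) f0 = - cR (gK σ (-a)) f0 := by
  rw [cR_gK hσ]
  unfold cL
  rw [show {y | ∃ l, MemIneg (gK σ a) l ∧ y = cFun (gK σ a) f0 l}
      = -(SR σ (-a) f0) from ?_]
  · rw [Real.sInf_def, neg_neg]
  · ext y
    simp only [Set.mem_neg, SR, Set.mem_setOf_eq]
    constructor
    · rintro ⟨l, hl, rfl⟩
      exact ⟨-l, by simpa using neg_pos.2 ((memIneg_gK hσ a l).1 hl), by
        rw [cFun_gK hσ, cval_neg_eq, neg_neg]⟩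
    · rintro ⟨l, hl, hy⟩
      refine ⟨-l, (memIneg_gK hσ a (-l)).2 (by linarith), ?_⟩
      rw [cFun_gK hσ, cval_neg_eq σ a f0 (-l), neg_neg, ← hy, neg_neg]

lemma cval_lb' {σ f0 l : ℝ} (a : ℝ) (hl : 0 < l) :
    a + σ*l/2 + f0/l ≤ cval σ a f0 l := by
  unfold cval
  rw [inv_mul_eq_div, le_div_iff₀ hl]
  have h := Real.add_one_le_exp (a*l + σ*l^2/2)
  have hf : f0/l*l = f0 := div_mul_cancel₀ _ hl.ne'
  nlinarith

lemma amgm {σ f0 l : ℝ} (hσ : 0 < σ) (hf0 : 0 < f0) (hl : 0 < l) :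
    Real.sqrt (2*σ*f0) ≤ σ*l/2 + f0/l := by
  have e1 : 2*σ*f0 = 2^2 * (σ*f0/2) := by ring
  rw [e1, Real.sqrt_mul (by positivity), Real.sqrt_sq (by norm_num : (0:ℝ) ≤ 2)]
  have e2 : σ*f0/2 = (σ*l/2) * (f0/l) := by field_simp
  rw [e2, Real.sqrt_mul (by positivity)]
  nlinarith [sq_nonneg (Real.sqrt (σ*l/2) - Real.sqrt (f0/l)),
    Real.sq_sqrt (show (0:ℝ) ≤ σ*l/2 by positivity),
    Real.sq_sqrt (show (0:ℝ) ≤ f0/l by positivity),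
    Real.sqrt_nonneg (σ*l/2), Real.sqrt_nonneg (f0/l)]

lemma cval_lb {σ f0 l : ℝ} (a : ℝ) (hσ : 0 < σ) (hf0 : 0 < f0) (hl : 0 < l) :
    a + Real.sqrt (2*σ*f0) ≤ cval σ a f0 l :=
  le_trans (by linarith [amgm hσ hf0 hl]) (cval_lb' a hl)

lemma SR_nonempty (σ a f0 : ℝ) : (SR σ a f0).Nonempty :=
  ⟨cval σ a f0 1, 1, one_pos, rfl⟩

lemma SR_bddBelow {σ f0 : ℝ} (a : ℝ) (hσ : 0 < σ) (hf0 : 0 < f0) :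
    BddBelow (SR σ a f0) := by
  refine ⟨a + Real.sqrt (2*σ*f0), ?_⟩
  rintro y ⟨l, hl, rfl⟩
  exact cval_lb a hσ hf0 hl

lemma sInf_SR_lb {σ f0 : ℝ} (a : ℝ) (hσ : 0 < σ) (hf0 : 0 < f0) :
    a + Real.sqrt (2*σ*f0) ≤ sInf (SR σ a f0) := by
  refine le_csInf (SR_nonempty σ a f0) ?_
  rintro y ⟨l, hl, rfl⟩
  exact cval_lb a hσ hf0 hl

/-- Uniform positive lower bound on the exponential part gives `0 < cR`. -/
lemma sInf_SR_pos {σ a f0 δ : ℝ} (hσ : 0 < σ) (hf0 : 0 < f0) (hδ : 0 < δ)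
    (hg : ∀ l, 0 < l → δ ≤ Real.exp (a*l + σ*l^2/2) - 1 + f0) :
    0 < sInf (SR σ a f0) := by
  set M : ℝ := max 1 (2*(1-a)/σ) with hM
  have hM1 : (1:ℝ) ≤ M := le_max_left _ _
  have hM0 : (0:ℝ) < M := lt_of_lt_of_le one_pos hM1
  have key : ∀ l, 0 < l → min (δ/M) 1 ≤ cval σ a f0 l := by
    intro l hl
    rcases le_total l M with hlM | hMl
    · refine le_trans (min_le_left _ _) ?_
      have h1 : δ/M ≤ δ/l := by gcongr
      refine le_trans h1 ?_
      have h2 : δ/l ≤ (Real.exp (a*l + σ*l^2/2) - 1 + f0)/l := by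
        gcongr
        exact hg l hl
      calc δ/l ≤ (Real.exp (a*l + σ*l^2/2) - 1 + f0)/l := h2
        _ = cval σ a f0 l := by rw [cval, inv_mul_eq_div]
    · refine le_trans (min_le_right _ _) ?_
      have h3 := cval_lb' (σ := σ) (f0 := f0) a hl
      have h4 : 2*(1-a)/σ ≤ M := le_max_right _ _
      have h5 : 0 < f0/l := div_pos hf0 hl
      have h6 : σ * (2*(1-a)/σ) / 2 = 1 - a := by field_simp
      nlinarith
  have : 0 < min (δ/M) 1 := lt_min (div_pos hδ hM0) one_pos
  refine lt_of_lt_of_le this ?_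
  refine le_csInf (SR_nonempty σ a f0) ?_
  rintro y ⟨l, hl, rfl⟩
  exact key l hl

lemma quad_lb {σ : ℝ} (hσ : 0 < σ) (a l : ℝ) :
    -(a^2)/(2*σ) ≤ a*l + σ*l^2/2 := by
  rw [div_le_iff₀ (by positivity : (0:ℝ) < 2*σ)]
  nlinarith [sq_nonneg (σ*l + a)]

/-- Critical case: `cR = 0`. -/
lemma sInf_SR_zero {σ a f0 : ℝ} (hσ : 0 < σ) (hf0 : 0 < f0) (ha : a < 0)
    (hcrit : Real.exp (-(a^2)/(2*σ)) = 1 - f0) :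
    sInf (SR σ a f0) = 0 := by
  have hl0 : 0 < -a/σ := div_pos (neg_pos.2 ha) hσ
  have hexp : a*(-a/σ) + σ*(-a/σ)^2/2 = -(a^2)/(2*σ)  := by
    field_simp
    ring
  have hmem : (0:ℝ) ∈ SR σ a f0 := by
    refine ⟨-a/σ, hl0, ?_⟩
    rw [cval, hexp, hcrit]
    ring
  have hle : sInf (SR σ a f0) ≤ 0 := csInf_le (SR_bddBelow a hσ hf0) hmem
  have hge : 0 ≤ sInf (SR σ a f0) := by
    refine le_csInf (SR_nonempty σ a f0) ?_
    rintro y ⟨l, hl, rfl⟩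
    have h1 : Real.exp (-(a^2)/(2*σ)) ≤ Real.exp (a*l + σ*l^2/2) :=
      Real.exp_le_exp.2 (quad_lb hσ a l)
    rw [hcrit] at h1
    have : 0 ≤ Real.exp (a*l + σ*l^2/2) - 1 + f0 := by linarith
    rw [cval, inv_mul_eq_div]
    positivity
  linarith

/-- Supercritical case: `cR < 0`. -/
lemma sInf_SR_neg {σ a f0 : ℝ} (hσ : 0 < σ) (hf0 : 0 < f0) (ha : a < 0)
    (hcrit : Real.exp (-(a^2)/(2*σ)) < 1 - f0) :
    sInf (SR σ a f0) < 0 := by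
  have hl0 : 0 < -a/σ := div_pos (neg_pos.2 ha) hσ
  have hexp : a*(-a/σ) + σ*(-a/σ)^2/2 = -(a^2)/(2*σ)  := by
    field_simp
    ring
  have hmem : cval σ a f0 (-a/σ) ∈ SR σ a f0 := ⟨-a/σ, hl0, rfl⟩
  refine lt_of_le_of_lt (csInf_le (SR_bddBelow a hσ hf0) hmem) ?_
  rw [cval, hexp]
  have hneg : Real.exp (-(a^2)/(2*σ)) - 1 + f0 < 0 := by linarith
  exact mul_neg_of_pos_of_neg (by positivity) hneg

/-- Subcritical case: `0 < cR` (for `f0 < 1`). -/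
lemma sInf_SR_pos_of {σ a f0 : ℝ} (hσ : 0 < σ) (hf0 : 0 < f0)
    (h : 1 - f0 < Real.exp (-(a^2)/(2*σ)) ∨ 0 ≤ a) :
    0 < sInf (SR σ a f0) := by
  rcases h with h | h
  · refine sInf_SR_pos hσ hf0 (δ := Real.exp (-(a^2)/(2*σ)) - (1 - f0)) (by linarith) ?_
    intro l hl
    have := Real.exp_le_exp.2 (quad_lb hσ a l)
    linarith
  · refine sInf_SR_pos hσ hf0 (δ := f0) hf0 ?_
    intro l hl
    have h0 : (0:ℝ) ≤ a*l + σ*l^2/2 := by positivity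
    have := Real.exp_le_exp.2 h0
    rw [Real.exp_zero] at this
    linarith

/-- `f0 ≥ 1` case: `0 < cR` always. -/
lemma sInf_SR_pos_of_one_le {σ a f0 : ℝ} (hσ : 0 < σ) (hf0 : 1 ≤ f0) :
    0 < sInf (SR σ a f0) := by
  refine sInf_SR_pos hσ (by linarith) (δ := Real.exp (-(a^2)/(2*σ))) (by positivity) ?_
  intro l hl
  have := Real.exp_le_exp.2 (quad_lb hσ a l)
  linarith


end SG

/-- signs of the spreading speeds for the Gaussian kernel with
mean `α` and variance `σ`, in terms of `r = α/√(2σ)`: if `f'(0) ≥ 1` then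
`c_l* < 0 < c_r*`; if `f'(0) < 1` there is a threshold `r* > 0` classifying
the five cases. -/
theorem signs_gaussian (σ α : ℝ) (hσ : 0 < σ) (k f : ℝ → ℝ) (f0 : ℝ)
    (hk : ∀ x : ℝ, k x =
      (Real.sqrt (2 * Real.pi * σ))⁻¹ * Real.exp (-((x - α)^2 / (2 * σ))))
    (hH : HypH f f0) :
    (1 ≤ f0 → cL k f0 < 0 ∧ 0 < cR k f0) ∧
    (f0 < 1 → ∃ rs : ℝ, 0 < rs ∧
      (rs < α / Real.sqrt (2 * σ) → 0 < cL k f0 ∧ cL k f0 < cR k f0) ∧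
      (α / Real.sqrt (2 * σ) = rs → 0 = cL k f0 ∧ cL k f0 < cR k f0) ∧
      (-rs < α / Real.sqrt (2 * σ) → α / Real.sqrt (2 * σ) < rs →
        cL k f0 < 0 ∧ 0 < cR k f0) ∧
      (α / Real.sqrt (2 * σ) = -rs → cL k f0 < cR k f0 ∧ cR k f0 = 0) ∧
      (α / Real.sqrt (2 * σ) < -rs → cL k f0 < cR k f0 ∧ cR k f0 < 0)) := by
  obtain ⟨-, -, -, -, hf0, -⟩ := hH
  have hkg : k = SG.gK σ α := funext hk
  have hcR : cR k f0 = sInf (SG.SR σ α f0) := by rw [hkg, SG.cR_gK hσ]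
  have hcL : cL k f0 = -sInf (SG.SR σ (-α) f0) := by
    rw [hkg, SG.cL_gK hσ, SG.cR_gK hσ]
  have hs : 0 < Real.sqrt (2*σ*f0) := Real.sqrt_pos.2 (by positivity)
  have hLR : cL k f0 < cR k f0 := by
    have h1 := SG.sInf_SR_lb (σ := σ) (f0 := f0) (-α) hσ hf0
    have h2 := SG.sInf_SR_lb (σ := σ) (f0 := f0) α hσ hf0
    rw [hcL, hcR]
    linarith
  constructor
  · intro h1f
    constructor
    · have := SG.sInf_SR_pos_of_one_le (σ := σ) (a := -α) hσ h1f
      rw [hcL]; linarith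
    · rw [hcR]; exact SG.sInf_SR_pos_of_one_le hσ h1f
  · intro hf01
    have h1f0 : 0 < 1 - f0 := by linarith
    set L : ℝ := -Real.log (1 - f0) with hLdef
    have hL : 0 < L := by
      have := Real.log_neg h1f0 (by linarith)
      simp only [hLdef]; linarith
    have hexpL : Real.exp (-L) = 1 - f0 := by
      rw [hLdef, neg_neg]; exact Real.exp_log h1f0
    set t : ℝ := Real.sqrt (2*σ) with htdef
    have ht : 0 < t := Real.sqrt_pos.2 (by positivity)
    have ht2 : t^2 = 2*σ := Real.sq_sqrt (by positivity)
    set rs : ℝ := Real.sqrt L with hrsdef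
    have hrs : 0 < rs := Real.sqrt_pos.2 hL
    have hrs2 : rs^2 = L := Real.sq_sqrt hL.le
    have fact1 : ∀ a : ℝ, a^2 < 2*σ*L → 1 - f0 < Real.exp (-(a^2)/(2*σ)) := by
      intro a h
      rw [← hexpL]
      apply Real.exp_lt_exp.2
      rw [neg_div, neg_lt_neg_iff, div_lt_iff₀ (by positivity : (0:ℝ) < 2*σ)]
      linarith
    have fact2 : ∀ a : ℝ, a^2 = 2*σ*L → Real.exp (-(a^2)/(2*σ)) = 1 - f0 := by
      intro a h
      rw [← hexpL]
      congr 1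
      rw [h]
      field_simp
    have fact3 : ∀ a : ℝ, 2*σ*L < a^2 → Real.exp (-(a^2)/(2*σ)) < 1 - f0 := by
      intro a h
      rw [← hexpL]
      apply Real.exp_lt_exp.2
      rw [neg_div, neg_lt_neg_iff, lt_div_iff₀ (by positivity : (0:ℝ) < 2*σ)]
      linarith
    have hrt : (rs*t)^2 = 2*σ*L := by rw [mul_pow, hrs2, ht2]; ring
    have hrt0 : 0 < rs*t := mul_pos hrs ht
    refine ⟨rs, hrs, ?_, ?_, ?_, ?_, ?_⟩
    · -- (i)  rs < α/t : 0 < cL ∧ cL < cR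
      intro h
      have hα : rs * t < α := (lt_div_iff₀ ht).1 h
      have hsq : 2*σ*L < (-α)^2 := by
        nlinarith [pow_lt_pow_left₀ hα hrt0.le two_ne_zero]
      have := SG.sInf_SR_neg hσ hf0 (a := -α) (by linarith) (fact3 _ hsq)
      exact ⟨by rw [hcL]; linarith, hLR⟩
    · -- (ii)  α/t = rs : 0 = cL ∧ cL < cR
      intro h
      have hα : α = rs * t := (div_eq_iff ht.ne').1 h
      have hsq : (-α)^2 = 2*σ*L := by rw [hα]; linear_combination hrt
      have := SG.sInf_SR_zero hσ hf0 (a := -α) (by linarith) (fact2 _ hsq)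
      exact ⟨by rw [hcL, this, neg_zero], hLR⟩
    · -- (iii)  -rs < α/t < rs : cL < 0 ∧ 0 < cR
      intro h1 h2
      have hα1 : -rs * t < α := (lt_div_iff₀ ht).1 h1
      have hα2 : α < rs * t := (div_lt_iff₀ ht).1 h2
      constructor
      · have hpos : 0 < sInf (SG.SR σ (-α) f0) := by
          rcases le_or_gt α 0 with hc | hc
          · exact SG.sInf_SR_pos_of hσ hf0 (Or.inr (by linarith))
          · refine SG.sInf_SR_pos_of hσ hf0 (Or.inl (fact1 _ ?_))
            nlinarith [pow_lt_pow_left₀ hα2 hc.le two_ne_zero]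
        rw [hcL]; linarith
      · rw [hcR]
        rcases le_or_gt 0 α with hc | hc
        · exact SG.sInf_SR_pos_of hσ hf0 (Or.inr hc)
        · refine SG.sInf_SR_pos_of hσ hf0 (Or.inl (fact1 _ ?_))
          have hm := mul_pos (show 0 < rs*t + α by linarith)
            (show 0 < rs*t - α by linarith)
          nlinarith [hm]
    · -- (iv)  α/t = -rs : cL < cR ∧ cR = 0
      intro h
      have hα : α = -rs * t := (div_eq_iff ht.ne').1 h
      have hsq : α^2 = 2*σ*L := by rw [hα]; linear_combination hrt
      refine ⟨hLR, ?_⟩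
      rw [hcR]
      exact SG.sInf_SR_zero hσ hf0 (by nlinarith) (fact2 _ hsq)
    · -- (v)  α/t < -rs : cL < cR ∧ cR < 0
      intro h
      have hα : α < -rs * t := (div_lt_iff₀ ht).1 h
      refine ⟨hLR, ?_⟩
      have hm := mul_pos (show 0 < -α - rs*t by linarith)
        (show 0 < -α + rs*t by linarith)
      rw [hcR]
      exact SG.sInf_SR_neg hσ hf0 (by nlinarith) (fact3 _ (by nlinarith [hm]))
end
end

section
/- Define ω(x) = (x−1)eˣ for x ∈ ℝ. For every θ > 0 with θ ≠ 1, the equation ω(z) = ω(−θz), i.e. (z−1)e^z + (θz+1)e^{−θz} = 0, has a unique nonzero real solution z(θ); setting z(1) = 0, the resulting function z : (0,∞) → (−∞,1) is continuous and strictly increasing, and it satisfies z(θ) ∈ (1 − 1/θ, 1) for θ > 1 and z(θ) ∈ (−1/θ, 1 − 1/θ) for 0 < θ < 1. -/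
open Real Filter Set Topology

noncomputable section

namespace IZ

def F (θ w : ℝ) : ℝ := (w - 1) * Real.exp w + (θ * w + 1) * Real.exp (-(θ * w))

lemma contF1 (θ : ℝ) : Continuous (fun w => F θ w) := by
  unfold F; continuity

lemma contF2 (w : ℝ) : Continuous (fun θ => F θ w) := by
  unfold F; continuity

lemma F_zero (θ : ℝ) : F θ 0 = 0 := by simp [F]

lemma hasDerivAt_Fw (θ w : ℝ) :
    HasDerivAt (fun w => F θ w) (w * Real.exp w - θ^2 * w * Real.exp (-(θ * w))) w := by
  have h1 : HasDerivAt (fun w : ℝ => (w - 1) * Real.exp w)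
      (1 * Real.exp w + (w - 1) * Real.exp w) w :=
    ((hasDerivAt_id w).sub_const 1).mul (Real.hasDerivAt_exp w)
  have hin : HasDerivAt (fun w : ℝ => -(θ * w)) (-θ) w := by
    exact (((hasDerivAt_id w).const_mul θ).neg).congr_deriv (by ring)
  have hexp : HasDerivAt (fun w : ℝ => Real.exp (-(θ * w)))
      (Real.exp (-(θ * w)) * (-θ)) w := hin.exp
  have h2 : HasDerivAt (fun w : ℝ => (θ * w + 1) * Real.exp (-(θ * w)))
      (θ * Real.exp (-(θ * w)) + (θ * w + 1) * (Real.exp (-(θ * w)) * (-θ))) w := by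
    have hl : HasDerivAt (fun w : ℝ => θ * w + 1) θ w := by
      simpa using ((hasDerivAt_id w).const_mul θ).add_const 1
    exact hl.mul hexp
  have := h1.add h2
  exact this.congr_deriv (by ring)

lemma hasDerivAt_Ft (w θ : ℝ) :
    HasDerivAt (fun θ => F θ w) (-(θ * w^2 * Real.exp (-(θ * w)))) θ := by
  have hin : HasDerivAt (fun θ : ℝ => -(θ * w)) (-w) θ := by
    exact (((hasDerivAt_id θ).mul_const w).neg).congr_deriv (by ring)
  have hexp : HasDerivAt (fun θ : ℝ => Real.exp (-(θ * w)))
      (Real.exp (-(θ * w)) * (-w)) θ := hin.exp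
  have hl : HasDerivAt (fun θ : ℝ => θ * w + 1) w θ := by
    simpa using ((hasDerivAt_id θ).mul_const w).add_const 1
  have h2 := hl.mul hexp
  have := (hasDerivAt_const θ ((w - 1) * Real.exp w)).add h2
  exact this.congr_deriv (by ring)

lemma F_anti_theta {w : ℝ} (hw : w ≠ 0) : StrictAntiOn (fun θ => F θ w) (Ici 0) := by
  apply strictAntiOn_of_deriv_neg (convex_Ici 0) (contF2 w).continuousOn
  intro θ hθ
  rw [interior_Ici] at hθ
  rw [(hasDerivAt_Ft w θ).deriv]
  have hθ' : 0 < θ := hθ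
  have hw2 : 0 < w^2 := by positivity
  have : 0 < θ * w^2 * Real.exp (-(θ * w)) := by positivity
  linarith

lemma exp_cmp {θ w : ℝ} (hθ : 0 < θ) :
    (Real.exp w < θ^2 * Real.exp (-(θ * w)) ↔ (1 + θ) * w < 2 * Real.log θ) := by
  have h2 : θ^2 = Real.exp (2 * Real.log θ) := by
    rw [two_mul, Real.exp_add, Real.exp_log hθ]; ring
  rw [Real.exp_neg, h2, show Real.exp (2 * Real.log θ) * (Real.exp (θ * w))⁻¹
    = Real.exp (2 * Real.log θ) / Real.exp (θ * w) from by ring,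
    lt_div_iff₀ (Real.exp_pos _), ← Real.exp_add, Real.exp_lt_exp]
  constructor <;> intro h <;> linarith

lemma exp_cmp' {θ w : ℝ} (hθ : 0 < θ) :
    (θ^2 * Real.exp (-(θ * w)) < Real.exp w ↔ 2 * Real.log θ < (1 + θ) * w) := by
  have h2 : θ^2 = Real.exp (2 * Real.log θ) := by
    rw [two_mul, Real.exp_add, Real.exp_log hθ]; ring
  rw [Real.exp_neg, h2, show Real.exp (2 * Real.log θ) * (Real.exp (θ * w))⁻¹
    = Real.exp (2 * Real.log θ) / Real.exp (θ * w) from by ring,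
    div_lt_iff₀ (Real.exp_pos _), ← Real.exp_add, Real.exp_lt_exp]
  constructor <;> intro h <;> linarith


lemma F_one_mono_nonneg : StrictMonoOn (fun w => F 1 w) (Ici 0) := by
  apply strictMonoOn_of_deriv_pos (convex_Ici 0) (contF1 1).continuousOn
  intro w hw
  rw [interior_Ici] at hw
  have hw' : 0 < w := hw
  rw [(hasDerivAt_Fw 1 w).deriv]
  have h1 : Real.exp (-(1 * w)) < Real.exp w := by
    rw [Real.exp_lt_exp]; linarith
  nlinarith [mul_pos hw' (sub_pos.mpr h1)]

lemma F_one_mono_nonpos : StrictMonoOn (fun w => F 1 w) (Iic 0) := by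
  apply strictMonoOn_of_deriv_pos (convex_Iic 0) (contF1 1).continuousOn
  intro w hw
  rw [interior_Iic] at hw
  have hw' : w < 0 := hw
  rw [(hasDerivAt_Fw 1 w).deriv]
  have h1 : Real.exp w < Real.exp (-(1 * w)) := by
    rw [Real.exp_lt_exp]; linarith
  nlinarith [mul_pos (neg_pos.mpr hw') (sub_pos.mpr h1)]

lemma F_one_pos {w : ℝ} (hw : 0 < w) : 0 < F 1 w := by
  have := F_one_mono_nonneg (self_mem_Ici) (mem_Ici.mpr hw.le) hw
  simpa [F_zero] using this

lemma F_one_neg {w : ℝ} (hw : w < 0) : F 1 w < 0 := by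
  have := F_one_mono_nonpos (mem_Iic.mpr hw.le) (self_mem_Iic) hw
  simpa [F_zero] using this

/-- h t = t - 1/t - 2 log t, used for endpoint sign estimates. -/
lemma hasDerivAt_h {t : ℝ} (ht : 0 < t) :
    HasDerivAt (fun t : ℝ => t - 1/t - 2 * Real.log t) (1 - (-(1/t^2)) - 2 * (1/t)) t := by
  have h1 : HasDerivAt (fun t : ℝ => 1/t) (-(1/t^2)) t := by
    simpa [one_div] using (hasDerivAt_inv ht.ne')
  have h2 : HasDerivAt (fun t : ℝ => 2 * Real.log t) (2 * (1/t)) t := by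
    simpa [one_div] using (Real.hasDerivAt_log ht.ne').const_mul 2
  exact ((hasDerivAt_id t).sub h1).sub h2

lemma cont_h : ContinuousOn (fun t : ℝ => t - 1/t - 2 * Real.log t) (Ioi 0) := by
  intro t ht
  have ht0 : (t:ℝ) ≠ 0 := (mem_Ioi.mp ht).ne'
  exact (((continuousAt_id).sub ((continuousAt_const).div continuousAt_id ht0)).sub
    ((Real.continuousAt_log ht0).const_mul 2)).continuousWithinAt

lemma log_lt {θ : ℝ} (hθ : 1 < θ) : 2 * Real.log θ < θ - 1/θ := by
  have hmono : StrictMonoOn (fun t : ℝ => t - 1/t - 2 * Real.log t) (Ici 1) := by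
    apply strictMonoOn_of_deriv_pos (convex_Ici 1) (cont_h.mono (by
      intro x hx; exact lt_of_lt_of_le one_pos (mem_Ici.mp hx)))
    intro t ht
    rw [interior_Ici] at ht
    have ht0 : 0 < t := lt_trans one_pos ht
    rw [(hasDerivAt_h ht0).deriv]
    have : 0 < (1 - 1/t)^2 := by
      have : 1/t < 1 := by rw [div_lt_one ht0]; exact ht
      nlinarith
    have htsq : (1 - 1/t)^2 = 1 - (-(1/t^2)) - 2 * (1/t) := by
      field_simp; ring
    linarith [htsq ▸ this]
  have := hmono (self_mem_Ici) (mem_Ici.mpr hθ.le) hθ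
  simp only [Real.log_one, one_div] at this ⊢
  norm_num at this
  exact this

lemma lt_log {θ : ℝ} (h0 : 0 < θ) (hθ : θ < 1) : θ - 1/θ < 2 * Real.log θ := by
  have hmono : StrictMonoOn (fun t : ℝ => t - 1/t - 2 * Real.log t) (Ioc 0 1) := by
    apply strictMonoOn_of_deriv_pos (convex_Ioc 0 1) (cont_h.mono (by
      intro x hx; exact hx.1))
    intro t ht
    rw [interior_Ioc] at ht
    have ht0 : 0 < t := ht.1
    rw [(hasDerivAt_h ht0).deriv]
    have h1t : 1 < 1/t := by rw [lt_div_iff₀ ht0]; linarith [ht.2]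
    have : 0 < (1 - 1/t)^2 := by nlinarith
    have htsq : (1 - 1/t)^2 = 1 - (-(1/t^2)) - 2 * (1/t) := by
      field_simp; ring
    linarith [htsq ▸ this]
  have := hmono (mem_Ioc.mpr ⟨h0, hθ.le⟩) (mem_Ioc.mpr ⟨one_pos, le_rfl⟩) hθ
  simp only [Real.log_one, one_div] at this ⊢
  norm_num at this
  exact this


lemma F_at_one {θ : ℝ} (h : 0 < θ) : 0 < F θ 1 := by
  have hF : F θ 1 = (θ + 1) * Real.exp (-θ) := by unfold F; ring_nf
  rw [hF]
  have := Real.exp_pos (-θ)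
  nlinarith

lemma F_lower_gt {θ : ℝ} (hθ : 1 < θ) : F θ (1 - 1/θ) < 0 := by
  have hθ0 : (0:ℝ) < θ := lt_trans one_pos hθ
  have key : θ^2 < Real.exp (θ - 1/θ) := by
    calc θ^2 = Real.exp (2 * Real.log θ) := by
          rw [two_mul, Real.exp_add, Real.exp_log hθ0]; ring
    _ < _ := Real.exp_lt_exp.mpr (log_lt hθ)
  have h1 : θ^2 * Real.exp (1 - θ) < Real.exp (1 - 1/θ) := by
    have := mul_lt_mul_of_pos_right key (Real.exp_pos (1 - θ))
    rwa [← Real.exp_add, show θ - 1/θ + (1 - θ) = 1 - 1/θ by ring] at this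
  have hF : θ * F θ (1 - 1/θ) = -Real.exp (1 - 1/θ) + θ^2 * Real.exp (1 - θ) := by
    unfold F
    rw [show θ * (1 - 1/θ) = θ - 1 by field_simp, show -(θ - 1) = 1 - θ by ring]
    field_simp
    ring
  have hmul : θ * F θ (1 - 1/θ) < 0 := by rw [hF]; linarith
  by_contra h
  push_neg at h
  nlinarith

lemma F_upper_lt {θ : ℝ} (h0 : 0 < θ) (hθ : θ < 1) : 0 < F θ (1 - 1/θ) := by
  have key : Real.exp (θ - 1/θ) < θ^2 := by
    calc Real.exp (θ - 1/θ) < Real.exp (2 * Real.log θ) :=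
          Real.exp_lt_exp.mpr (lt_log h0 hθ)
    _ = θ^2 := by rw [two_mul, Real.exp_add, Real.exp_log h0]; ring
  have h1 : Real.exp (1 - 1/θ) < θ^2 * Real.exp (1 - θ) := by
    have := mul_lt_mul_of_pos_right key (Real.exp_pos (1 - θ))
    rwa [← Real.exp_add, show θ - 1/θ + (1 - θ) = 1 - 1/θ by ring] at this
  have hF : θ * F θ (1 - 1/θ) = -Real.exp (1 - 1/θ) + θ^2 * Real.exp (1 - θ) := by
    unfold F
    rw [show θ * (1 - 1/θ) = θ - 1 by field_simp, show -(θ - 1) = 1 - θ by ring]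
    field_simp
    ring
  have hmul : 0 < θ * F θ (1 - 1/θ) := by rw [hF]; linarith
  by_contra h
  push_neg at h
  nlinarith

lemma F_lower_lt {θ : ℝ} (h0 : 0 < θ) : F θ (-1/θ) < 0 := by
  have harg : θ * (-1/θ) = -1 := by field_simp
  have hF : F θ (-1/θ) = (-1/θ - 1) * Real.exp (-1/θ) := by
    unfold F
    rw [harg]
    norm_num
  rw [hF]
  have h1 : 0 < (1:ℝ)/θ := by positivity
  have h2 := Real.exp_pos (-1/θ)
  nlinarith


def GoodRoot (θ r : ℝ) : Prop :=
  ∀ w : ℝ, w ≠ 0 → (F θ w < 0 ↔ w < r) ∧ (0 < F θ w ↔ r < w)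

lemma goodRoot_iff {θ r : ℝ} (h0 : F θ r = 0)
    (key1 : ∀ w, w ≠ 0 → w < r → F θ w < 0)
    (key2 : ∀ w, w ≠ 0 → r < w → 0 < F θ w) : GoodRoot θ r := by
  intro w hw
  constructor
  · constructor
    · intro hF
      rcases lt_trichotomy w r with h | h | h
      · exact h
      · exact absurd hF (by rw [h, h0]; exact lt_irrefl 0)
      · exact absurd hF (by linarith [key2 w hw h])
    · exact key1 w hw
  · constructor
    · intro hF
      rcases lt_trichotomy w r with h | h | h
      · exact absurd hF (by linarith [key1 w hw h])
      · exact absurd hF (by rw [h, h0]; exact lt_irrefl 0)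
      · exact h
    · exact key2 w hw

lemma goodRoot_one : GoodRoot 1 0 :=
  goodRoot_iff (F_zero 1)
    (fun w _ hw => F_one_neg hw)
    (fun w _ hw => F_one_pos hw)

lemma exists_goodRoot_gt {θ : ℝ} (hθ : 1 < θ) :
    ∃ r ∈ Ioo (1 - 1/θ) 1, GoodRoot θ r := by
  have hθ0 : (0:ℝ) < θ := lt_trans one_pos hθ
  set c := 2 * Real.log θ / (1 + θ) with hc
  have h1θ : (0:ℝ) < 1 + θ := by linarith
  have hlog : 0 < Real.log θ := Real.log_pos hθ
  have hc0 : 0 < c := by positivity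
  have anti : StrictAntiOn (fun w => F θ w) (Icc 0 c) := by
    apply strictAntiOn_of_deriv_neg (convex_Icc 0 c) (contF1 θ).continuousOn
    intro w hw
    rw [interior_Icc] at hw
    rw [(hasDerivAt_Fw θ w).deriv]
    have hwc : (1 + θ) * w < 2 * Real.log θ := by
      have := (lt_div_iff₀ h1θ).mp hw.2
      linarith
    have hcmp : Real.exp w < θ^2 * Real.exp (-(θ * w)) := (exp_cmp hθ0).mpr hwc
    nlinarith [mul_pos hw.1 (sub_pos.mpr hcmp)]
  have mono : StrictMonoOn (fun w => F θ w) (Ici c) := by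
    apply strictMonoOn_of_deriv_pos (convex_Ici c) (contF1 θ).continuousOn
    intro w hw
    rw [interior_Ici] at hw
    rw [(hasDerivAt_Fw θ w).deriv]
    have hwc : 2 * Real.log θ < (1 + θ) * w := by
      have := (div_lt_iff₀ h1θ).mp hw
      linarith
    have hcmp : θ^2 * Real.exp (-(θ * w)) < Real.exp w := (exp_cmp' hθ0).mpr hwc
    have hw0 : 0 < w := lt_trans hc0 hw
    nlinarith [mul_pos hw0 (sub_pos.mpr hcmp)]
  have hFnegOn : ∀ w, 0 < w → w ≤ c → F θ w < 0 := by
    intro w h0 hc'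
    have := anti (left_mem_Icc.mpr hc0.le) ⟨h0.le, hc'⟩ h0
    simpa [F_zero] using this
  have hlow : 0 < 1 - 1/θ := by
    have : 1/θ < 1 := by rw [div_lt_one hθ0]; exact hθ
    linarith
  have hle : 1 - 1/θ ≤ 1 := by
    have : 0 < 1/θ := by positivity
    linarith
  obtain ⟨r, hrmem, hr0⟩ : ∃ r ∈ Ioo (1 - 1/θ) 1, F θ r = 0 := by
    have hIV := intermediate_value_Ioo hle ((contF1 θ).continuousOn (s := Icc (1-1/θ) 1))
    have h0mem : (0:ℝ) ∈ Ioo (F θ (1 - 1/θ)) (F θ 1) := ⟨F_lower_gt hθ, F_at_one hθ0⟩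
    obtain ⟨r, hr, hfr⟩ := hIV h0mem
    exact ⟨r, hr, hfr⟩
  have hrpos : 0 < r := lt_trans hlow hrmem.1
  have hcr : c < r := by
    by_contra h
    push_neg at h
    exact absurd hr0 (hFnegOn r hrpos h).ne
  refine ⟨r, hrmem, goodRoot_iff hr0 ?_ ?_⟩
  · intro w hw hwr
    rcases lt_or_gt_of_ne hw with hneg | hpos
    · have h1 := F_one_neg hneg
      have h2 : F θ w < F 1 w :=
        F_anti_theta hw (mem_Ici.mpr zero_le_one) (mem_Ici.mpr hθ0.le) hθ
      linarith
    · rcases le_or_gt w c with h | h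
      · exact hFnegOn w hpos h
      · have := mono (mem_Ici.mpr h.le) (mem_Ici.mpr hcr.le) hwr
        simpa [hr0] using this
  · intro w hw hrw
    have := mono (mem_Ici.mpr hcr.le) (mem_Ici.mpr (hcr.trans hrw).le) hrw
    simpa [hr0] using this

lemma exists_goodRoot_lt {θ : ℝ} (h0 : 0 < θ) (hθ : θ < 1) :
    ∃ r ∈ Ioo (-1/θ) (1 - 1/θ), GoodRoot θ r := by
  set c := 2 * Real.log θ / (1 + θ) with hc
  have h1θ : (0:ℝ) < 1 + θ := by linarith
  have hlog : Real.log θ < 0 := Real.log_neg h0 hθ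
  have hc0 : c < 0 := div_neg_of_neg_of_pos (by linarith) h1θ
  have mono : StrictMonoOn (fun w => F θ w) (Iic c) := by
    apply strictMonoOn_of_deriv_pos (convex_Iic c) (contF1 θ).continuousOn
    intro w hw
    rw [interior_Iic] at hw
    rw [(hasDerivAt_Fw θ w).deriv]
    have hwlt : w < c := hw
    have hwc : (1 + θ) * w < 2 * Real.log θ := by
      have := (lt_div_iff₀ h1θ).mp hwlt
      linarith
    have hcmp : Real.exp w < θ^2 * Real.exp (-(θ * w)) := (exp_cmp h0).mpr hwc
    have hw0 : w < 0 := lt_trans hwlt hc0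
    nlinarith [mul_pos (neg_pos.mpr hw0) (sub_pos.mpr hcmp)]
  have anti : StrictAntiOn (fun w => F θ w) (Icc c 0) := by
    apply strictAntiOn_of_deriv_neg (convex_Icc c 0) (contF1 θ).continuousOn
    intro w hw
    rw [interior_Icc] at hw
    rw [(hasDerivAt_Fw θ w).deriv]
    have hwc : 2 * Real.log θ < (1 + θ) * w := by
      have := (div_lt_iff₀ h1θ).mp hw.1
      linarith
    have hcmp : θ^2 * Real.exp (-(θ * w)) < Real.exp w := (exp_cmp' h0).mpr hwc
    nlinarith [mul_pos (neg_pos.mpr hw.2) (sub_pos.mpr hcmp)]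
  have hFposOn : ∀ w, c ≤ w → w < 0 → 0 < F θ w := by
    intro w hcw hw0
    have := anti ⟨hcw, hw0.le⟩ (right_mem_Icc.mpr hc0.le) hw0
    simpa [F_zero] using this
  have h1t : 1 < 1/θ := by rw [lt_div_iff₀ h0]; linarith
  have hup : 1 - 1/θ < 0 := by linarith
  have hle : -1/θ ≤ 1 - 1/θ := by
    rw [neg_div]
    linarith
  obtain ⟨r, hrmem, hr0⟩ : ∃ r ∈ Ioo (-1/θ) (1 - 1/θ), F θ r = 0 := by
    have hIV := intermediate_value_Ioo hle ((contF1 θ).continuousOn (s := Icc (-1/θ) (1-1/θ)))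
    have h0mem : (0:ℝ) ∈ Ioo (F θ (-1/θ)) (F θ (1 - 1/θ)) :=
      ⟨F_lower_lt h0, F_upper_lt h0 hθ⟩
    obtain ⟨r, hr, hfr⟩ := hIV h0mem
    exact ⟨r, hr, hfr⟩
  have hrneg : r < 0 := lt_trans hrmem.2 hup
  have hrc : r < c := by
    by_contra h
    push_neg at h
    exact absurd hr0 (hFposOn r h hrneg).ne'
  refine ⟨r, hrmem, goodRoot_iff hr0 ?_ ?_⟩
  · intro w hw hwr
    have := mono (mem_Iic.mpr (hwr.trans hrc).le) (mem_Iic.mpr hrc.le) hwr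
    simpa [hr0] using this
  · intro w hw hrw
    rcases lt_or_gt_of_ne hw with hneg | hpos
    · rcases le_or_gt c w with h | h
      · exact hFposOn w h hneg
      · have := mono (mem_Iic.mpr hrc.le) (mem_Iic.mpr h.le) hrw
        simpa [hr0] using this
    · have h1 := F_one_pos hpos
      have h2 : F 1 w < F θ w :=
        F_anti_theta hw (mem_Ici.mpr h0.le) (mem_Ici.mpr zero_le_one) hθ
      linarith


lemma exists_goodRoot (θ : ℝ) (hθ : 0 < θ) : ∃ r, GoodRoot θ r := by
  rcases lt_trichotomy θ 1 with h | h | h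
  · obtain ⟨r, _, hr⟩ := exists_goodRoot_lt hθ h; exact ⟨r, hr⟩
  · subst h; exact ⟨0, goodRoot_one⟩
  · obtain ⟨r, _, hr⟩ := exists_goodRoot_gt h; exact ⟨r, hr⟩

lemma exists_ne_between {a b : ℝ} (h : a < b) : ∃ w, w ≠ 0 ∧ a < w ∧ w < b := by
  by_cases hm : (a + b)/2 = 0
  · have hb : b = -a := by linarith
    have ha : a < 0 := by linarith
    refine ⟨a/2, by intro hh; exact ha.ne (by linarith), by linarith, by linarith⟩
  · exact ⟨(a + b)/2, hm, by linarith, by linarith⟩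

lemma goodRoot_unique {θ r r' : ℝ} (h : GoodRoot θ r) (h' : GoodRoot θ r') : r = r' := by
  have key : ∀ s s' : ℝ, GoodRoot θ s → GoodRoot θ s' → s < s' → False := by
    intro s s' hs hs' hlt
    obtain ⟨w, hw0, hsw, hws'⟩ := exists_ne_between hlt
    have h1 := ((hs w hw0).2).mpr hsw
    have h2 := ((hs' w hw0).1).mpr hws'
    linarith
  rcases lt_trichotomy r r' with hlt | heq | hgt
  · exact absurd (key r r' h h' hlt) not_false
  · exact heq
  · exact absurd (key r' r h' h hgt) not_false

def z (θ : ℝ) : ℝ := if h : 0 < θ then (exists_goodRoot θ h).choose else 0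

lemma z_good {θ : ℝ} (hθ : 0 < θ) : GoodRoot θ (z θ) := by
  rw [z, dif_pos hθ]; exact (exists_goodRoot θ hθ).choose_spec

lemma z_one : z 1 = 0 := goodRoot_unique (z_good one_pos) goodRoot_one

lemma z_root {θ : ℝ} (hθ : 0 < θ) (hz : z θ ≠ 0) : F θ (z θ) = 0 := by
  have h := z_good hθ (z θ) hz
  rcases lt_trichotomy (F θ (z θ)) 0 with hF | hF | hF
  · exact absurd (h.1.mp hF) (lt_irrefl _)
  · exact hF
  · exact absurd (h.2.mp hF) (lt_irrefl _)

lemma z_bounds_gt {θ : ℝ} (h : 1 < θ) : z θ ∈ Ioo (1 - 1/θ) 1 := by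
  obtain ⟨r, hrmem, hr⟩ := exists_goodRoot_gt h
  rwa [goodRoot_unique (z_good (lt_trans one_pos h)) hr]

lemma z_bounds_lt {θ : ℝ} (h0 : 0 < θ) (h : θ < 1) : z θ ∈ Ioo (-1/θ) (1 - 1/θ) := by
  obtain ⟨r, hrmem, hr⟩ := exists_goodRoot_lt h0 h
  rwa [goodRoot_unique (z_good h0) hr]

lemma one_sub_inv_pos {θ : ℝ} (h : 1 < θ) : 0 < 1 - 1/θ := by
  have hθ0 : (0:ℝ) < θ := lt_trans one_pos h
  have : 1/θ < 1 := by rw [div_lt_one hθ0]; exact h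
  linarith

lemma one_sub_inv_neg {θ : ℝ} (h0 : 0 < θ) (h : θ < 1) : 1 - 1/θ < 0 := by
  have : 1 < 1/θ := by rw [lt_div_iff₀ h0]; linarith
  linarith

lemma z_ne {θ : ℝ} (hθ : 0 < θ) (hne : θ ≠ 1) : z θ ≠ 0 := by
  rcases lt_or_gt_of_ne hne with h | h
  · exact ne_of_lt (lt_trans (z_bounds_lt hθ h).2 (one_sub_inv_neg hθ h))
  · exact ne_of_gt (lt_trans (one_sub_inv_pos h) (z_bounds_gt h).1)

lemma z_lt_one {θ : ℝ} (hθ : 0 < θ) : z θ < 1 := by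
  rcases lt_trichotomy θ 1 with h | h | h
  · linarith [(z_bounds_lt hθ h).2, one_sub_inv_neg hθ h]
  · rw [h, z_one]; exact one_pos
  · exact (z_bounds_gt h).2

lemma z_strictMono : StrictMonoOn z (Ioi 0) := by
  intro θ1 h1 θ2 h2 hlt
  have h1' : (0:ℝ) < θ1 := h1
  have h2' : (0:ℝ) < θ2 := h2
  by_cases e1 : θ1 = 1
  · subst e1
    rw [z_one]
    exact lt_trans (one_sub_inv_pos hlt) (z_bounds_gt hlt).1
  by_cases e2 : θ2 = 1
  · subst e2
    rw [z_one]
    exact lt_trans (z_bounds_lt h1' hlt).2 (one_sub_inv_neg h1' hlt)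
  · have hz1 := z_ne h1' e1
    have hF1 : F θ1 (z θ1) = 0 := z_root h1' hz1
    have hF2 : F θ2 (z θ1) < F θ1 (z θ1) :=
      F_anti_theta hz1 (mem_Ici.mpr h1'.le) (mem_Ici.mpr h2'.le) hlt
    rw [hF1] at hF2
    exact ((z_good h2' (z θ1) hz1).1).mp hF2

lemma z_cont : ContinuousOn z (Ioi 0) := by
  intro θ0 hθ0
  have hθ0' : (0:ℝ) < θ0 := hθ0
  apply ContinuousAt.continuousWithinAt
  rw [ContinuousAt, tendsto_order]
  constructor
  · intro a ha
    obtain ⟨w, hw0, haw, hwz⟩ := exists_ne_between ha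
    have hFneg : F θ0 w < 0 := ((z_good hθ0' w hw0).1).mpr hwz
    have hev1 : ∀ᶠ θ in 𝓝 θ0, F θ w < 0 :=
      (isOpen_lt (contF2 w) continuous_const).mem_nhds hFneg
    filter_upwards [hev1, eventually_gt_nhds hθ0'] with θ hF hθ
    have := ((z_good hθ w hw0).1).mp hF
    linarith
  · intro b hb
    obtain ⟨w, hw0, hzw, hwb⟩ := exists_ne_between hb
    have hFpos : 0 < F θ0 w := ((z_good hθ0' w hw0).2).mpr hzw
    have hev1 : ∀ᶠ θ in 𝓝 θ0, 0 < F θ w :=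
      (isOpen_lt continuous_const (contF2 w)).mem_nhds hFpos
    filter_upwards [hev1, eventually_gt_nhds hθ0'] with θ hF hθ
    have := ((z_good hθ w hw0).2).mp hF
    linarith

end IZ

/-- there is a (unique nonzero-solution-selecting) function
`z : (0,∞) → (-∞,1)` with `z(1) = 0` such that for `θ ≠ 1`, `z(θ)` is the
unique nonzero solution of `(z-1)e^z + (θz+1)e^{-θz} = 0`; this function is
continuous and strictly increasing, with `z(θ) ∈ (1 - 1/θ, 1)` for `θ > 1`
and `z(θ) ∈ (-1/θ, 1 - 1/θ)` for `0 < θ < 1`. -/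
theorem implicit_function_z :
    ∃ z : ℝ → ℝ,
      z 1 = 0 ∧
      (∀ θ : ℝ, 0 < θ → z θ < 1) ∧
      (∀ θ : ℝ, 0 < θ → θ ≠ 1 →
        z θ ≠ 0 ∧
        (z θ - 1) * Real.exp (z θ) + (θ * z θ + 1) * Real.exp (-(θ * z θ)) = 0 ∧
        (∀ w : ℝ, w ≠ 0 →
          (w - 1) * Real.exp w + (θ * w + 1) * Real.exp (-(θ * w)) = 0 →
          w = z θ)) ∧
      ContinuousOn z (Ioi 0) ∧
      StrictMonoOn z (Ioi 0) ∧
      (∀ θ : ℝ, 1 < θ → z θ ∈ Ioo (1 - 1/θ) 1) ∧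
      (∀ θ : ℝ, 0 < θ → θ < 1 → z θ ∈ Ioo (-1/θ) (1 - 1/θ)) := by
  refine ⟨IZ.z, IZ.z_one, fun θ hθ => IZ.z_lt_one hθ, ?_, IZ.z_cont, IZ.z_strictMono,
    fun θ h => IZ.z_bounds_gt h, fun θ h0 h => IZ.z_bounds_lt h0 h⟩
  intro θ hθ hne
  refine ⟨IZ.z_ne hθ hne, IZ.z_root hθ (IZ.z_ne hθ hne), ?_⟩
  intro w hw hFw
  have h := IZ.z_good hθ w hw
  have hFw' : IZ.F θ w = 0 := hFw
  rcases lt_trichotomy w (IZ.z θ) with hlt | heq | hgt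
  · have := (h.1).mpr hlt
    rw [hFw'] at this
    exact absurd this (lt_irrefl 0)
  · exact heq
  · have := (h.2).mpr hgt
    rw [hFw'] at this
    exact absurd this (lt_irrefl 0)
end
end

section
/- Let z : (0,∞) → (−∞,1) be as in the implicit-function lemma: z(1)=0 and for θ ≠ 1, z(θ) is the unique nonzero real solution of (z−1)e^z + (θz+1)e^{−θz} = 0. Define q(θ) = 1 − e^{z(θ)}/(1 + θ·z(θ)) for θ ≥ 1. Then q(1) = 0, q is strictly increasing on [1,∞), q(θ) → 1 as θ → +∞, and consequently for every s ∈ (0,1) there exists a unique θ* > 1 with q(θ*) = s. -/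
open Real Filter Set Topology

noncomputable section

lemma psi_strictAnti : StrictAntiOn (fun x : ℝ => (1 - x) * Real.exp x) (Ici 0) := by
  apply strictAntiOn_of_deriv_neg (convex_Ici 0) (by fun_prop)
  intro x hx
  rw [interior_Ici] at hx
  have h : HasDerivAt (fun x : ℝ => (1 - x) * Real.exp x) (-x * Real.exp x) x := by
    have := ((hasDerivAt_id x).const_sub 1).mul (Real.hasDerivAt_exp x)
    exact this.congr_deriv (by rw [id_eq]; ring)
  rw [h.deriv]
  have := Real.exp_pos x
  have hx' : (0:ℝ) < x := hx
  nlinarith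

lemma phi_strictAnti : StrictAntiOn (fun x : ℝ => (1 + x) * Real.exp (-x)) (Ici 0) := by
  apply strictAntiOn_of_deriv_neg (convex_Ici 0) (by fun_prop)
  intro x hx
  rw [interior_Ici] at hx
  have hexp : HasDerivAt (fun x : ℝ => Real.exp (-x)) (-Real.exp (-x)) x := by
    have := (Real.hasDerivAt_exp (-x)).comp x ((hasDerivAt_id x).neg)
    exact this.congr_deriv (by simp)
  have h : HasDerivAt (fun x : ℝ => (1 + x) * Real.exp (-x)) (-x * Real.exp (-x)) x := by
    have := ((hasDerivAt_id x).const_add 1).mul hexp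
    exact this.congr_deriv (by rw [id_eq]; ring)
  rw [h.deriv]
  have := Real.exp_pos (-x)
  have hx' : (0:ℝ) < x := hx
  nlinarith

lemma h_pos : ∀ x ∈ Ioo (0:ℝ) 1, 0 < 2 * Real.log (1 - x) + x + x / (1 - x) := by
  have hmono : StrictMonoOn (fun x : ℝ => 2 * Real.log (1 - x) + x + x / (1 - x)) (Ico 0 1) := by
    apply strictMonoOn_of_deriv_pos (convex_Ico 0 1)
    · intro x hx
      have hx1 : (0:ℝ) < 1 - x := by simp only [mem_Ico] at hx; linarith [hx.2]
      have c1 : ContinuousAt (fun x : ℝ => 1 - x) x := by fun_prop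
      have c2 : ContinuousAt (fun x : ℝ => Real.log (1 - x)) x :=
        (Real.continuousAt_log (ne_of_gt hx1)).comp c1
      have c3 : ContinuousAt (fun x : ℝ => x / (1 - x)) x := continuousAt_id.div c1 (ne_of_gt hx1)
      exact (((continuousAt_const.mul c2).add continuousAt_id).add c3).continuousWithinAt
    · intro x hx
      rw [interior_Ico] at hx
      obtain ⟨hx0, hx1⟩ := hx
      have h1x : (0:ℝ) < 1 - x := by linarith
      have hd1 : HasDerivAt (fun x : ℝ => 1 - x) (-1) x := (hasDerivAt_id x).const_sub 1
      have hdlog : HasDerivAt (fun x : ℝ => Real.log (1 - x)) (-1 / (1 - x)) x :=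
        hd1.log (ne_of_gt h1x)
      have hddiv : HasDerivAt (fun x : ℝ => x / (1 - x))
          ((1 * (1 - x) - x * (-1)) / (1 - x) ^ 2) x := (hasDerivAt_id x).div hd1 (ne_of_gt h1x)
      have h : HasDerivAt (fun x : ℝ => 2 * Real.log (1 - x) + x + x / (1 - x))
          (x ^ 2 / (1 - x) ^ 2) x := by
        have := ((hdlog.const_mul 2).add (hasDerivAt_id x)).add hddiv
        exact this.congr_deriv (by field_simp; ring)
      rw [h.deriv]
      positivity
  intro x hx
  obtain ⟨hx0, hx1⟩ := hx
  have := hmono (left_mem_Ico.mpr one_pos) ⟨hx0.le, hx1⟩ hx0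
  simpa using this

lemma key_ineq {zv t : ℝ} (hz0 : 0 < zv) (hz1 : zv < 1) (ht : 0 ≤ t)
    (heq : (1 + t) * Real.exp (-t) = (1 - zv) * Real.exp zv) :
    (1 - zv) * (1 + t) < 1 := by
  set u := zv / (1 - zv) with hu_def
  have h1z : (0:ℝ) < 1 - zv := by linarith
  have hu : 0 < u := div_pos hz0 h1z
  have h1u : (1 - zv) * (1 + u) = 1 := by rw [hu_def]; field_simp; ring
  have hEu : 0 < Real.exp u := Real.exp_pos u
  have hEz : 0 < Real.exp zv := Real.exp_pos zv
  -- φ(u) < ψ(zv)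
  have hphi : (1 + u) * Real.exp (-u) < (1 - zv) * Real.exp zv := by
    have hh := h_pos zv ⟨hz0, hz1⟩
    have hexp : (1:ℝ) < Real.exp (2 * Real.log (1 - zv) + zv + u) := by
      have h' := Real.exp_lt_exp.mpr hh
      rw [Real.exp_zero] at h'
      exact h'
    have e1 : Real.exp (2 * Real.log (1 - zv) + zv + u)
        = (1 - zv) ^ 2 * Real.exp zv * Real.exp u := by
      rw [Real.exp_add, Real.exp_add, two_mul, Real.exp_add, Real.exp_log h1z]
      ring
    rw [e1] at hexp
    have hmulinv : Real.exp (-u) * Real.exp u = 1 := by rw [← Real.exp_add]; simp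
    have hc : 0 < (1 - zv) * Real.exp u := mul_pos h1z hEu
    have hac : ((1 + u) * Real.exp (-u)) * ((1 - zv) * Real.exp u) = 1 := by
      linear_combination (1 + u) * (1 - zv) * hmulinv + h1u
    have hbc : 1 < ((1 - zv) * Real.exp zv) * ((1 - zv) * Real.exp u) := by
      nlinarith [hexp]
    exact lt_of_mul_lt_mul_right (by rw [hac]; exact hbc) hc.le
  have htu : t < u := by
    by_contra hle
    push_neg at hle
    rcases eq_or_lt_of_le hle with h | h
    · rw [h] at hphi; rw [heq] at hphi; linarith
    · have := phi_strictAnti (mem_Ici.mpr hu.le) (mem_Ici.mpr ht) h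
      simp only at this
      rw [heq] at this
      linarith
  nlinarith [h1u, htu, h1z]

lemma mono_core {z1 z2 t1 t2 : ℝ} (hz1nn : 0 ≤ z1) (hz12 : z1 < z2) (hz2lt : z2 < 1)
    (ht1 : 0 ≤ t1) (ht2 : 0 < t2)
    (con1 : (1 + t1) * Real.exp (-t1) = (1 - z1) * Real.exp z1)
    (con2 : (1 + t2) * Real.exp (-t2) = (1 - z2) * Real.exp z2)
    (hkey1 : (1 - z1) * (1 + t1) ≤ 1) :
    Real.exp z2 / (1 + t2) < Real.exp z1 / (1 + t1) := by
  have h1t1 : (0:ℝ) < 1 + t1 := by linarith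
  have h1t2 : (0:ℝ) < 1 + t2 := by linarith
  have h1z1 : (0:ℝ) < 1 - z1 := by linarith
  have h1z2 : (0:ℝ) < 1 - z2 := by linarith
  set c1 := Real.exp z1 / (1 + t1) with hc1def
  set c2 := Real.exp z2 / (1 + t2) with hc2def
  have hc1pos : 0 < c1 := div_pos (Real.exp_pos _) h1t1
  have hc2pos : 0 < c2 := div_pos (Real.exp_pos _) h1t2
  have hc2lt : c2 < Real.exp z2 := div_lt_self (Real.exp_pos _) (by linarith)
  have hc1ge : (1 - z1) * Real.exp z1 ≤ c1 := by
    rw [hc1def, le_div_iff₀ h1t1]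
    nlinarith [Real.exp_pos z1]
  -- log forms of the constraints
  have lcon1 : Real.log (1 + t1) + -t1 = Real.log (1 - z1) + z1 := by
    have h := congrArg Real.log con1
    rwa [Real.log_mul (ne_of_gt h1t1) (Real.exp_ne_zero _),
      Real.log_mul (ne_of_gt h1z1) (Real.exp_ne_zero _), Real.log_exp, Real.log_exp] at h
  have lcon2 : Real.log (1 + t2) + -t2 = Real.log (1 - z2) + z2 := by
    have h := congrArg Real.log con2
    rwa [Real.log_mul (ne_of_gt h1t2) (Real.exp_ne_zero _),
      Real.log_mul (ne_of_gt h1z2) (Real.exp_ne_zero _), Real.log_exp, Real.log_exp] at h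
  -- values of the implicit relation on the curve
  have hd1 : Real.exp z1 / c1 = 1 + t1 := by
    rw [hc1def]; field_simp
  have hd2 : Real.exp z2 / c2 = 1 + t2 := by
    rw [hc2def]; field_simp
  have hl1 : Real.log c1 = z1 - Real.log (1 + t1) := by
    rw [hc1def, Real.log_div (Real.exp_ne_zero _) (ne_of_gt h1t1), Real.log_exp]
  have hl2 : Real.log c2 = z2 - Real.log (1 + t2) := by
    rw [hc2def, Real.log_div (Real.exp_ne_zero _) (ne_of_gt h1t2), Real.log_exp]
  have hG1 : Real.exp z1 / c1 + Real.log c1 + Real.log (1 - z1) - 1 = 0 := by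
    rw [hd1, hl1]; linarith
  have hG2 : Real.exp z2 / c2 + Real.log c2 + Real.log (1 - z2) - 1 = 0 := by
    rw [hd2, hl2]; linarith
  -- the relation is strictly decreasing in the z-variable at fixed c1
  have hA : StrictAntiOn (fun x : ℝ => Real.exp x / c1 + Real.log (1 - x)) (Icc z1 z2) := by
    apply strictAntiOn_of_deriv_neg (convex_Icc _ _)
    · intro x hx
      have h1x : (0:ℝ) < 1 - x := by
        have := hx.2; linarith
      have cx1 : ContinuousAt (fun x : ℝ => Real.exp x / c1) x :=
        Real.continuous_exp.continuousAt.div_const c1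
      have cx2 : ContinuousAt (fun x : ℝ => Real.log (1 - x)) x :=
        (Real.continuousAt_log (ne_of_gt h1x)).comp (by fun_prop)
      exact (cx1.add cx2).continuousWithinAt
    · intro x hx
      rw [interior_Icc] at hx
      obtain ⟨hxl, hxr⟩ := hx
      have h1x : (0:ℝ) < 1 - x := by linarith
      have hder : HasDerivAt (fun x : ℝ => Real.exp x / c1 + Real.log (1 - x))
          (Real.exp x / c1 + -1 / (1 - x)) x :=
        ((Real.hasDerivAt_exp x).div_const c1).add
          (((hasDerivAt_id x).const_sub 1).log (ne_of_gt h1x))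
      rw [hder.deriv]
      have hpsi : (1 - x) * Real.exp x < (1 - z1) * Real.exp z1 :=
        psi_strictAnti (mem_Ici.mpr hz1nn) (mem_Ici.mpr (by linarith : (0:ℝ) ≤ x)) hxl
      have hlt : Real.exp x / c1 < 1 / (1 - x) := by
        rw [div_lt_div_iff₀ hc1pos h1x]
        nlinarith
      have : -1 / (1 - x) = -(1 / (1 - x)) := by ring
      rw [this]
      linarith
  have hfz : Real.exp z2 / c1 + Real.log (1 - z2) < Real.exp z1 / c1 + Real.log (1 - z1) :=
    hA (left_mem_Icc.mpr hz12.le) (right_mem_Icc.mpr hz12.le) hz12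
  have hGA : Real.exp z2 / c1 + Real.log c1 + Real.log (1 - z2) - 1 < 0 := by linarith
  -- conclude by contradiction, using that the relation is strictly
  -- decreasing in the c-variable on (0, exp z2)
  by_contra hcon
  push_neg at hcon
  have hi : Real.exp z2 / c1 + Real.log c1 < Real.exp z2 / c2 + Real.log c2 := by linarith
  rcases eq_or_lt_of_le hcon with h | h
  · rw [h] at hi; exact lt_irrefl _ hi
  · have hB : StrictAntiOn (fun c : ℝ => Real.exp z2 / c + Real.log c) (Icc c1 c2) := by
      apply strictAntiOn_of_deriv_neg (convex_Icc _ _)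
      · intro c hc
        have hcpos : 0 < c := lt_of_lt_of_le hc1pos hc.1
        exact ((continuousAt_const.div continuousAt_id (ne_of_gt hcpos)).add
          (Real.continuousAt_log (ne_of_gt hcpos))).continuousWithinAt
      · intro x hx
        rw [interior_Icc] at hx
        have hx0 : 0 < x := lt_trans hc1pos hx.1
        have hder : HasDerivAt (fun c : ℝ => Real.exp z2 / c + Real.log c)
            (Real.exp z2 * (-(x ^ 2)⁻¹) + x⁻¹) x := by
          have h1 : HasDerivAt (fun c : ℝ => Real.exp z2 / c) (Real.exp z2 * (-(x ^ 2)⁻¹)) x := by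
            simpa [div_eq_mul_inv] using (hasDerivAt_inv (ne_of_gt hx0)).const_mul (Real.exp z2)
          exact h1.add (Real.hasDerivAt_log (ne_of_gt hx0))
        rw [hder.deriv]
        have heq : Real.exp z2 * (-(x ^ 2)⁻¹) + x⁻¹ = (x - Real.exp z2) / x ^ 2 := by
          field_simp
          ring
        rw [heq]
        apply div_neg_of_neg_of_pos
        · have : x < c2 := hx.2
          linarith
        · positivity
    have := hB (left_mem_Icc.mpr h.le) (right_mem_Icc.mpr h.le) h
    simp only at this
    linarith

/-- with `z` the implicit function of the lemma (the unique
nonzero solution of `(z-1)e^z + (θz+1)e^{-θz} = 0` for `θ ≠ 1`, and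
`z(1) = 0`), the function `q(θ) = 1 - e^{z(θ)}/(1 + θ z(θ))` satisfies
`q(1) = 0`, is strictly increasing on `[1,∞)`, tends to `1` at `+∞`, and
hence takes every value `s ∈ (0,1)` exactly once on `(1,∞)`. -/
theorem q_properties (z : ℝ → ℝ)
    (hz1 : z 1 = 0)
    (hzlt : ∀ θ : ℝ, 0 < θ → z θ < 1)
    (hzeq : ∀ θ : ℝ, 0 < θ → θ ≠ 1 →
      z θ ≠ 0 ∧
      (z θ - 1) * Real.exp (z θ) + (θ * z θ + 1) * Real.exp (-(θ * z θ)) = 0)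
    (hzc : ContinuousOn z (Ioi 0))
    (hzm : StrictMonoOn z (Ioi 0)) :
    (1 - Real.exp (z 1) / (1 + 1 * z 1)) = 0 ∧
    StrictMonoOn (fun θ : ℝ => 1 - Real.exp (z θ) / (1 + θ * z θ)) (Ici 1) ∧
    Tendsto (fun θ : ℝ => 1 - Real.exp (z θ) / (1 + θ * z θ)) atTop (𝓝 1) ∧
    (∀ s ∈ Ioo (0:ℝ) 1, ∃! θ : ℝ,
      1 < θ ∧ 1 - Real.exp (z θ) / (1 + θ * z θ) = s) := by
  -- basic facts
  have hznn : ∀ θ : ℝ, 1 ≤ θ → 0 ≤ z θ := by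
    intro θ hθ
    rcases eq_or_lt_of_le hθ with h | h
    · rw [← h, hz1]
    · have := hzm (mem_Ioi.mpr one_pos) (mem_Ioi.mpr (by linarith)) h
      rw [hz1] at this
      exact this.le
  have hcon : ∀ θ : ℝ, 1 < θ →
      (1 + θ * z θ) * Real.exp (-(θ * z θ)) = (1 - z θ) * Real.exp (z θ) := by
    intro θ hθ
    have h := (hzeq θ (by linarith) (by linarith [hθ] : θ ≠ 1)).2
    linear_combination h
  have hq1 : (1 - Real.exp (z 1) / (1 + 1 * z 1)) = 0 := by
    rw [hz1]; norm_num
  -- strict monotonicity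
  have hmono : StrictMonoOn (fun θ : ℝ => 1 - Real.exp (z θ) / (1 + θ * z θ)) (Ici 1) := by
    intro θ1 hθ1 θ2 hθ2 h12
    simp only
    have hθ1' : (1:ℝ) ≤ θ1 := hθ1
    have hp1 : (0:ℝ) < θ1 := by linarith
    have hθ2gt : 1 < θ2 := lt_of_le_of_lt hθ1' h12
    have hp2 : (0:ℝ) < θ2 := by linarith
    have hz1nn : 0 ≤ z θ1 := hznn θ1 hθ1'
    have hz12 : z θ1 < z θ2 := hzm (mem_Ioi.mpr hp1) (mem_Ioi.mpr hp2) h12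
    have hz2pos : 0 < z θ2 := lt_of_le_of_lt hz1nn hz12
    have hz2lt : z θ2 < 1 := hzlt θ2 hp2
    have hz1lt : z θ1 < 1 := hzlt θ1 hp1
    have ht1 : 0 ≤ θ1 * z θ1 := mul_nonneg hp1.le hz1nn
    have ht2 : 0 < θ2 * z θ2 := mul_pos hp2 hz2pos
    have con2 := hcon θ2 hθ2gt
    rcases eq_or_lt_of_le hθ1' with h | h
    · -- θ1 = 1
      have hz10 : z θ1 = 0 := by rw [← h, hz1]
      have hcore := mono_core (t1 := θ1 * z θ1) hz1nn hz12 hz2lt ht1 ht2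
        (by rw [hz10]; norm_num) con2 (by rw [hz10]; norm_num)
      linarith
    · -- θ1 > 1
      have con1 := hcon θ1 h
      have hz1pos : 0 < z θ1 := by
        have := hzm (mem_Ioi.mpr one_pos) (mem_Ioi.mpr hp1) h
        rwa [hz1] at this
      have hkey := key_ineq hz1pos hz1lt ht1 con1
      have hcore := mono_core hz1nn hz12 hz2lt ht1 ht2 con1 con2 hkey.le
      linarith
  -- limit at infinity
  have hz2pos : 0 < z 2 := by
    have := hzm (mem_Ioi.mpr one_pos) (mem_Ioi.mpr two_pos) one_lt_two
    rwa [hz1] at this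
  have hlim : Tendsto (fun θ : ℝ => 1 - Real.exp (z θ) / (1 + θ * z θ)) atTop (𝓝 1) := by
    have hfrac : Tendsto (fun θ : ℝ => Real.exp (z θ) / (1 + θ * z θ)) atTop (𝓝 0) := by
      have hub : Tendsto (fun θ : ℝ => Real.exp 1 / (1 + θ * z 2)) atTop (𝓝 0) := by
        apply Tendsto.div_atTop tendsto_const_nhds
        apply tendsto_atTop_add_const_left
        exact Tendsto.atTop_mul_const hz2pos tendsto_id
      apply tendsto_of_tendsto_of_tendsto_of_le_of_le' tendsto_const_nhds hub
      · filter_upwards [eventually_ge_atTop (2:ℝ)] with θ hθ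
        have h1 : 0 ≤ z θ := hznn θ (by linarith)
        positivity
      · filter_upwards [eventually_ge_atTop (2:ℝ)] with θ hθ
        have hp : (0:ℝ) < θ := by linarith
        have hz2le : z 2 ≤ z θ := by
          rcases eq_or_lt_of_le hθ with h | h
          · rw [h]
          · exact (hzm (mem_Ioi.mpr two_pos) (mem_Ioi.mpr hp) h).le
        have h1 : 0 ≤ z θ := le_trans hz2pos.le hz2le
        have hd1 : (0:ℝ) < 1 + θ * z 2 := by nlinarith
        have hd2 : (0:ℝ) < 1 + θ * z θ := by nlinarith
        apply div_le_div₀ (Real.exp_pos 1).le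
        · exact Real.exp_le_exp.mpr (hzlt θ hp).le
        · exact hd1
        · nlinarith
    have h := (tendsto_const_nhds (x := (1:ℝ))).sub hfrac
    simpa using h
  refine ⟨hq1, hmono, hlim, ?_⟩
  -- existence and uniqueness
  intro s hs
  obtain ⟨hs0, hs1⟩ := hs
  -- continuity of q on [1, ∞)
  have hqc : ContinuousOn (fun θ : ℝ => 1 - Real.exp (z θ) / (1 + θ * z θ)) (Ici 1) := by
    apply ContinuousOn.sub continuousOn_const
    apply ContinuousOn.div
    · exact Real.continuous_exp.comp_continuousOn
        (hzc.mono (fun x hx => mem_Ioi.mpr (lt_of_lt_of_le one_pos hx)))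
    · exact continuousOn_const.add (continuousOn_id.mul
        (hzc.mono (fun x hx => mem_Ioi.mpr (lt_of_lt_of_le one_pos hx))))
    · intro θ hθ
      have h1 : 0 ≤ z θ := hznn θ hθ
      have hp : (0:ℝ) < θ := lt_of_lt_of_le one_pos hθ
      positivity
  -- find M with q M > s
  have hev : ∀ᶠ θ in (atTop : Filter ℝ), s < 1 - Real.exp (z θ) / (1 + θ * z θ) :=
    hlim.eventually (eventually_gt_nhds hs1)
  obtain ⟨M, hM⟩ := (hev.and (eventually_ge_atTop (1:ℝ))).exists
  obtain ⟨hMs, hM1⟩ := hM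
  have hsub : Ioo ((1:ℝ) - Real.exp (z 1) / (1 + 1 * z 1))
      (1 - Real.exp (z M) / (1 + M * z M)) ⊆
      (fun θ : ℝ => 1 - Real.exp (z θ) / (1 + θ * z θ)) '' Ioo 1 M := by
    apply intermediate_value_Ioo hM1 (hqc.mono (Icc_subset_Ici_self))
  have hmem : s ∈ Ioo ((1:ℝ) - Real.exp (z 1) / (1 + 1 * z 1))
      (1 - Real.exp (z M) / (1 + M * z M)) := by
    rw [hq1]
    exact ⟨hs0, hMs⟩
  obtain ⟨θ₀, hθ₀mem, hθ₀eq⟩ := hsub hmem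
  refine ⟨θ₀, ⟨hθ₀mem.1, hθ₀eq⟩, ?_⟩
  intro θ' hθ'
  obtain ⟨hθ'1, hθ'eq⟩ := hθ'
  exact hmono.injOn (mem_Ici.mpr hθ'1.le) (mem_Ici.mpr hθ₀mem.1.le) (hθ'eq.trans hθ₀eq.symm)
end
end
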